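/- arXiv:1905.12842 — 4 statements merged into one kernel-verified Lean document; each statement's English description precedes it below -/
import Mathlib

section
/- Let A be positive semidefinite and X, Y positive definite n×n matrices, with α = max{λ_max(X), λ_max(Y)} and β = λ_min(A). Then δ_∞(A+X, A+Y) ≤ (α/(α+β)) δ_∞(X,Y), where δ_∞(P,Q) := ‖log(P^{-1/2} Q P^{-1/2})‖ is the Thompson (invariant) metric on positive definite matrices. -/
open Matrix MeasureTheory ProbabilityTheory
open scoped Classical RealInnerProductSpace

/-- Operator (spectral) norm of a real matrix. -/
noncomputable def opNorm {m n : Type*} [Fintype m] [Fintype n] [DecidableEq n]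
    (A : Matrix m n ℝ) : ℝ :=
  ‖LinearMap.toContinuousLinearMap (Matrix.toEuclideanLin A)‖

/-- Frobenius norm of a real matrix. -/
noncomputable def frob {m n : Type*} [Fintype m] [Fintype n] (A : Matrix m n ℝ) : ℝ :=
  Real.sqrt (∑ i, ∑ j, (A i j) ^ 2)

/-- Positive semidefinite square root (junk value `0` off the PSD matrices). -/
noncomputable def sqrtPD {n : Type*} [Fintype n] [DecidableEq n]
    (A : Matrix n n ℝ) : Matrix n n ℝ :=
  if h : A.PosSemidef then
    (h.1.eigenvectorUnitary : Matrix n n ℝ) * Matrix.diagonal (Real.sqrt ∘ h.1.eigenvalues) *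
      (star (h.1.eigenvectorUnitary : Matrix n n ℝ))
  else 0

/-- Matrix logarithm of a hermitian matrix via the spectral theorem
(junk value `0` off the hermitian matrices). -/
noncomputable def mlog {n : Type*} [Fintype n] [DecidableEq n]
    (A : Matrix n n ℝ) : Matrix n n ℝ :=
  if h : A.IsHermitian then
    (h.eigenvectorUnitary : Matrix n n ℝ) * Matrix.diagonal (Real.log ∘ h.eigenvalues) *
      (star (h.eigenvectorUnitary : Matrix n n ℝ))
  else 0

/-- Thompson (invariant) metric `δ∞(A,B) = ‖log (A^{-1/2} B A^{-1/2})‖`. -/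
noncomputable def thompson {n : Type*} [Fintype n] [DecidableEq n]
    (A B : Matrix n n ℝ) : ℝ :=
  opNorm (mlog ((sqrtPD A)⁻¹ * B * (sqrtPD A)⁻¹))

/-- Largest (real) eigenvalue. -/
noncomputable def lamMax {n : Type*} [Fintype n] [DecidableEq n] (A : Matrix n n ℝ) : ℝ :=
  sSup (spectrum ℝ A)

/-- Smallest (real) eigenvalue. -/
noncomputable def lamMin {n : Type*} [Fintype n] [DecidableEq n] (A : Matrix n n ℝ) : ℝ :=
  sInf (spectrum ℝ A)

/-- Solution `P = Σ_{k≥0} (Lᵀ)^k M L^k` of the discrete Lyapunov equation `P = Lᵀ P L + M`. -/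
noncomputable def dlyap {n : Type*} [Fintype n] [DecidableEq n]
    (L M : Matrix n n ℝ) : Matrix n n ℝ :=
  ∑' k : ℕ, (L ^ k)ᵀ * M * (L ^ k)

/-- `K` stabilizes `(A,B)`: the closed loop matrix `A + BK` has spectral radius `< 1`. -/
def Stabilizes {n d : Type*} [Fintype n] [DecidableEq n] [Fintype d]
    (A : Matrix n n ℝ) (B : Matrix n d ℝ) (K : Matrix d n ℝ) : Prop :=
  ∀ z ∈ spectrum ℂ ((A + B * K).map ((↑) : ℝ → ℂ)), ‖z‖ < 1

section Aux
variable {n : ℕ}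

lemma psd_smul {r : ℝ} (hr : 0 ≤ r) {B : Matrix (Fin n) (Fin n) ℝ} (hB : B.PosSemidef) :
    (r • B).PosSemidef := by
  exact hB.smul hr

lemma sumsq_mulVec {U : Matrix (Fin n) (Fin n) ℝ} (hU : U ∈ Matrix.unitaryGroup (Fin n) ℝ)
    (w : Fin n → ℝ) : ∑ i, (U *ᵥ w) i ^ 2 = ∑ i, w i ^ 2 := by
  have h1 : ∀ v : Fin n → ℝ, ∑ i, v i ^ 2 = v ⬝ᵥ v := by
    intro v; simp [dotProduct, sq]
  have hUU : Uᴴ * U = 1 := by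
    have := (Unitary.mem_iff.mp hU).1
    rwa [Matrix.star_eq_conjTranspose] at this
  rw [h1, h1]
  calc (U *ᵥ w) ⬝ᵥ (U *ᵥ w) = star (U *ᵥ w) ⬝ᵥ (U *ᵥ w) := by rw [star_trivial]
    _ = (star w ᵥ* Uᴴ) ⬝ᵥ (U *ᵥ w) := by rw [star_mulVec]
    _ = (w ᵥ* Uᴴ) ⬝ᵥ (U *ᵥ w) := by rw [star_trivial]
    _ = ((w ᵥ* Uᴴ) ᵥ* U) ⬝ᵥ w := dotProduct_mulVec _ _ _
    _ = (w ᵥ* (Uᴴ * U)) ⬝ᵥ w := by rw [vecMul_vecMul]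
    _ = w ⬝ᵥ w := by rw [hUU, vecMul_one]

lemma norm_euclidean (v : Fin n → ℝ) :
    ‖(WithLp.equiv 2 (Fin n → ℝ)).symm v‖ = Real.sqrt (∑ i, v i ^ 2) := by
  rw [EuclideanSpace.norm_eq]
  congr 1
  refine Finset.sum_congr rfl fun i _ => ?_
  simp [Real.norm_eq_abs, sq_abs]

lemma opNorm_conj_le {U : Matrix (Fin n) (Fin n) ℝ} (hU : U ∈ Matrix.unitaryGroup (Fin n) ℝ)
    (d : Fin n → ℝ) {s : ℝ} (hs : 0 ≤ s) (hd : ∀ i, |d i| ≤ s) :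
    opNorm (U * Matrix.diagonal d * star U) ≤ s := by
  unfold opNorm
  apply ContinuousLinearMap.opNorm_le_bound _ hs
  intro x
  set N := U * Matrix.diagonal d * star U with hN
  obtain ⟨v, rfl⟩ := (WithLp.equiv 2 (Fin n → ℝ)).symm.surjective x
  rw [LinearMap.coe_toContinuousLinearMap']
  rw [show toEuclideanLin N ((WithLp.equiv 2 (Fin n → ℝ)).symm v) =
    (WithLp.equiv 2 (Fin n → ℝ)).symm (N *ᵥ v) from rfl, norm_euclidean, norm_euclidean]
  have hsU : star U ∈ Matrix.unitaryGroup (Fin n) ℝ := Unitary.star_mem hU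
  have key : ∑ i, (N *ᵥ v) i ^ 2 ≤ s ^ 2 * ∑ i, v i ^ 2 := by
    have h1 : N *ᵥ v = U *ᵥ (Matrix.diagonal d *ᵥ (star U *ᵥ v)) := by
      rw [mulVec_mulVec, mulVec_mulVec]
    rw [h1, sumsq_mulVec hU]
    set y := star U *ᵥ v with hy
    have h2 : ∑ i, (Matrix.diagonal d *ᵥ y) i ^ 2 ≤ s ^ 2 * ∑ i, y i ^ 2 := by
      rw [Finset.mul_sum]
      refine Finset.sum_le_sum fun i _ => ?_
      rw [mulVec_diagonal]
      have h3 : d i ^ 2 ≤ s ^ 2 := sq_le_sq' (neg_le_of_abs_le (hd i)) (le_of_abs_le (hd i))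
      calc (d i * y i) ^ 2 = d i ^ 2 * y i ^ 2 := by ring
        _ ≤ s ^ 2 * y i ^ 2 := by nlinarith [sq_nonneg (y i)]
    calc ∑ i, (Matrix.diagonal d *ᵥ y) i ^ 2 ≤ s ^ 2 * ∑ i, y i ^ 2 := h2
      _ = s ^ 2 * ∑ i, v i ^ 2 := by rw [hy, sumsq_mulVec hsU]
  calc Real.sqrt (∑ i, (N *ᵥ v) i ^ 2) ≤ Real.sqrt (s ^ 2 * ∑ i, v i ^ 2) :=
        Real.sqrt_le_sqrt key
    _ = s * Real.sqrt (∑ i, v i ^ 2) := by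
        rw [Real.sqrt_mul (sq_nonneg s), Real.sqrt_sq hs]

lemma abs_le_opNorm_conj {U : Matrix (Fin n) (Fin n) ℝ} (hU : U ∈ Matrix.unitaryGroup (Fin n) ℝ)
    (d : Fin n → ℝ) (j : Fin n) : |d j| ≤ opNorm (U * Matrix.diagonal d * star U) := by
  set N := U * Matrix.diagonal d * star U with hN
  have hUU : star U * U = 1 := (Unitary.mem_iff.mp hU).1
  set v : Fin n → ℝ := fun i => U i j with hv
  have hNU : N * U = U * Matrix.diagonal d := by
    rw [hN, mul_assoc, hUU, mul_one]
  have hcol : ∀ (B : Matrix (Fin n) (Fin n) ℝ), B *ᵥ v = fun i => (B * U) i j := by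
    intro B; funext i
    simp [mulVec, dotProduct, Matrix.mul_apply, hv]
  have hNv : N *ᵥ v = d j • v := by
    rw [hcol, hNU]
    funext i
    simp [Matrix.mul_diagonal, hv, mul_comm]
  have hnv : ∑ i, v i ^ 2 = 1 := by
    have : ∑ i, v i ^ 2 = (star U * U) j j := by
      simp [Matrix.mul_apply, hv, Matrix.star_apply, sq, mul_comm]
    rw [this, hUU, Matrix.one_apply_eq]
  have hx := ContinuousLinearMap.le_opNorm
    (LinearMap.toContinuousLinearMap (Matrix.toEuclideanLin N))
    ((WithLp.equiv 2 (Fin n → ℝ)).symm v)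
  rw [LinearMap.coe_toContinuousLinearMap'] at hx
  rw [show toEuclideanLin N ((WithLp.equiv 2 (Fin n → ℝ)).symm v) =
    (WithLp.equiv 2 (Fin n → ℝ)).symm (N *ᵥ v) from rfl, norm_euclidean, norm_euclidean, hnv] at hx
  rw [hNv] at hx
  have habs : ∀ i, (d j • v) i ^ 2 = d j ^ 2 * v i ^ 2 := by
    intro i; simp [mul_pow]
  simp only [habs] at hx
  rw [← Finset.mul_sum, hnv, mul_one, Real.sqrt_one, mul_one,
    Real.sqrt_sq_eq_abs] at hx
  exact hx

section Herm
variable {H : Matrix (Fin n) (Fin n) ℝ} (hH : H.IsHermitian)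

lemma real_spectral (hH : H.IsHermitian) :
    H = (hH.eigenvectorUnitary : Matrix (Fin n) (Fin n) ℝ) * Matrix.diagonal hH.eigenvalues *
      star (hH.eigenvectorUnitary : Matrix (Fin n) (Fin n) ℝ) := by
  have := hH.spectral_theorem
  simpa using this

lemma conj_unitary_psd {U B : Matrix (Fin n) (Fin n) ℝ}
    (hB : B.PosSemidef) : (U * B * star U).PosSemidef := by
  simpa [Matrix.star_eq_conjTranspose] using hB.mul_mul_conjTranspose_same U

lemma conj_unitary_psd_iff {U B : Matrix (Fin n) (Fin n) ℝ}
    (hU : U ∈ Matrix.unitaryGroup (Fin n) ℝ) :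
    (U * B * star U).PosSemidef ↔ B.PosSemidef := by
  constructor
  · intro h
    have h2 := conj_unitary_psd (U := star U) h
    have hUU : star U * U = 1 := (Unitary.mem_iff.mp hU).1
    rw [star_star] at h2
    have : star U * (U * B * star U) * U = B := by
      rw [show U * B * star U = U * (B * star U) from mul_assoc _ _ _, ← mul_assoc, hUU, one_mul,
        mul_assoc, hUU, mul_one]
    rwa [this] at h2
  · exact conj_unitary_psd

lemma smul_one_sub_eq (hH : H.IsHermitian) (r : ℝ) :
    r • (1 : Matrix (Fin n) (Fin n) ℝ) - H =
      (hH.eigenvectorUnitary : Matrix (Fin n) (Fin n) ℝ) *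
        Matrix.diagonal (fun i => r - hH.eigenvalues i) *
        star (hH.eigenvectorUnitary : Matrix (Fin n) (Fin n) ℝ) := by
  set U := (hH.eigenvectorUnitary : Matrix (Fin n) (Fin n) ℝ)
  have hUU : U * star U = 1 := (Unitary.mem_iff.mp hH.eigenvectorUnitary.2).2
  have hdiag : Matrix.diagonal (fun i => r - hH.eigenvalues i) =
      r • (1 : Matrix (Fin n) (Fin n) ℝ) - Matrix.diagonal hH.eigenvalues := by
    ext i j
    simp only [Matrix.sub_apply, Matrix.smul_apply, Matrix.one_apply, Matrix.diagonal_apply,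
      smul_eq_mul]
    split_ifs <;> ring
  rw [hdiag, Matrix.mul_sub, Matrix.sub_mul]
  have h1 : U * (r • (1 : Matrix (Fin n) (Fin n) ℝ)) * star U =
      r • (1 : Matrix (Fin n) (Fin n) ℝ) := by
    rw [mul_smul_comm, mul_one, smul_mul_assoc, hUU]
  rw [h1, ← real_spectral hH]

lemma psd_smul_one_sub_iff (hH : H.IsHermitian) (r : ℝ) :
    (r • (1 : Matrix (Fin n) (Fin n) ℝ) - H).PosSemidef ↔ ∀ i, hH.eigenvalues i ≤ r := by
  rw [smul_one_sub_eq hH r, conj_unitary_psd_iff hH.eigenvectorUnitary.2,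
    Matrix.posSemidef_diagonal_iff]
  exact forall_congr' fun i => by constructor <;> intro h <;> linarith

lemma sub_smul_one_eq (hH : H.IsHermitian) (r : ℝ) :
    H - r • (1 : Matrix (Fin n) (Fin n) ℝ) =
      (hH.eigenvectorUnitary : Matrix (Fin n) (Fin n) ℝ) *
        Matrix.diagonal (fun i => hH.eigenvalues i - r) *
        star (hH.eigenvectorUnitary : Matrix (Fin n) (Fin n) ℝ) := by
  have h := smul_one_sub_eq hH r
  have h0 : (fun i => hH.eigenvalues i - r) = fun i => -(r - hH.eigenvalues i) := by
    funext i; ring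
  have : Matrix.diagonal (fun i => hH.eigenvalues i - r) =
      - Matrix.diagonal (fun i => r - hH.eigenvalues i) := by
    rw [h0, Matrix.diagonal_neg]
  rw [this, Matrix.mul_neg, Matrix.neg_mul, ← h, neg_sub]

lemma psd_sub_smul_one_iff (hH : H.IsHermitian) (r : ℝ) :
    (H - r • (1 : Matrix (Fin n) (Fin n) ℝ)).PosSemidef ↔ ∀ i, r ≤ hH.eigenvalues i := by
  rw [sub_smul_one_eq hH r, conj_unitary_psd_iff hH.eigenvectorUnitary.2,
    Matrix.posSemidef_diagonal_iff]
  exact forall_congr' fun i => by constructor <;> intro h <;> linarith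

lemma spectrum_eq_range (hH : H.IsHermitian) :
    spectrum ℝ H = Set.range hH.eigenvalues := by
  apply Set.eq_of_subset_of_subset
  · intro x hx
    by_contra hnot
    have hne : ∀ i, x - hH.eigenvalues i ≠ 0 := by
      intro i h
      exact hnot ⟨i, by linarith [sub_eq_zero.mp h]⟩
    rw [spectrum.mem_iff] at hx
    apply hx
    rw [Algebra.algebraMap_eq_smul_one]
    set U := (hH.eigenvectorUnitary : Matrix (Fin n) (Fin n) ℝ)
    have hUU : U * star U = 1 := (Unitary.mem_iff.mp hH.eigenvectorUnitary.2).2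
    rw [Matrix.isUnit_iff_isUnit_det]
    rw [smul_one_sub_eq hH x]
    rw [Matrix.det_mul, Matrix.det_mul]
    have : U.det * (Matrix.diagonal fun i => x - hH.eigenvalues i).det * (star U).det =
        (Matrix.diagonal fun i => x - hH.eigenvalues i).det * (U * star U).det := by
      rw [Matrix.det_mul]; ring
    rw [this, hUU, Matrix.det_one, mul_one, Matrix.det_diagonal]
    exact (Finset.prod_ne_zero_iff.mpr fun i _ => hne i).isUnit
  · rintro _ ⟨i, rfl⟩
    exact hH.eigenvalues_mem_spectrum_real i

lemma eig_le_lamMax (hH : H.IsHermitian) (i : Fin n) : hH.eigenvalues i ≤ lamMax H := by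
  rw [lamMax, spectrum_eq_range hH]
  exact le_csSup (Set.finite_range _).bddAbove ⟨i, rfl⟩

lemma lamMin_le_eig (hH : H.IsHermitian) (i : Fin n) : lamMin H ≤ hH.eigenvalues i := by
  rw [lamMin, spectrum_eq_range hH]
  exact csInf_le (Set.finite_range _).bddBelow ⟨i, rfl⟩

end Herm

lemma lamMin_nonneg {A : Matrix (Fin n) (Fin n) ℝ} (hA : A.PosSemidef) : 0 ≤ lamMin A := by
  rw [lamMin, spectrum_eq_range hA.1]
  rcases isEmpty_or_nonempty (Fin n) with h | h
  · rw [Set.range_eq_empty]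
    simp [Real.sInf_empty]
  · exact le_csInf (Set.range_nonempty _) (by rintro _ ⟨i, rfl⟩; exact hA.eigenvalues_nonneg i)

lemma lamMax_nonneg {A : Matrix (Fin n) (Fin n) ℝ} (hA : A.PosSemidef) : 0 ≤ lamMax A := by
  rcases isEmpty_or_nonempty (Fin n) with h | h
  · rw [lamMax, spectrum_eq_range hA.1, Set.range_eq_empty]
    simp [Real.sSup_empty]
  · exact le_trans (hA.eigenvalues_nonneg (Classical.arbitrary _)) (eig_le_lamMax hA.1 _)

lemma posdef_conj {Q S : Matrix (Fin n) (Fin n) ℝ} (hQ : Q.PosDef) (hS : S.IsHermitian)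
    (hdet : IsUnit S.det) : (S * Q * S).PosDef := by
  have h := hQ.conjTranspose_mul_mul_same (B := S)
    (Matrix.mulVec_injective_of_isUnit ((Matrix.isUnit_iff_isUnit_det S).mpr hdet))
  rwa [hS.eq] at h

lemma conj_herm_psd_iff {S B : Matrix (Fin n) (Fin n) ℝ} (hS : S.IsHermitian)
    (hdet : IsUnit S.det) : (S * B * S).PosSemidef ↔ B.PosSemidef := by
  constructor
  · intro h
    have h2 := h.mul_mul_conjTranspose_same S⁻¹
    rw [hS.inv.eq] at h2
    have key : S⁻¹ * (S * B * S) * S⁻¹ = B := by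
      have e : S⁻¹ * (S * B * S) * S⁻¹ = S⁻¹ * S * B * (S * S⁻¹) := by
        simp only [mul_assoc]
      rw [e, Matrix.nonsing_inv_mul _ hdet, Matrix.mul_nonsing_inv _ hdet, one_mul, mul_one]
    rwa [key] at h2
  · intro h
    have h2 := h.mul_mul_conjTranspose_same S
    rwa [hS.eq] at h2

section Bridge
variable {P Q : Matrix (Fin n) (Fin n) ℝ}

lemma sqrtPD_eq (hP : P.PosDef) : sqrtPD P =
    (hP.posSemidef.1.eigenvectorUnitary : Matrix (Fin n) (Fin n) ℝ) *
      Matrix.diagonal (Real.sqrt ∘ hP.posSemidef.1.eigenvalues) *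
      star (hP.posSemidef.1.eigenvectorUnitary : Matrix (Fin n) (Fin n) ℝ) :=
  dif_pos hP.posSemidef

lemma sqrtPD_herm (hP : P.PosDef) : (sqrtPD P).IsHermitian := by
  rw [sqrtPD_eq hP]
  exact (conj_unitary_psd (Matrix.posSemidef_diagonal_iff.mpr fun i => Real.sqrt_nonneg _)).1

lemma sqrtPD_mul_self (hP : P.PosDef) : sqrtPD P * sqrtPD P = P := by
  rw [sqrtPD_eq hP]
  set U := (hP.posSemidef.1.eigenvectorUnitary : Matrix (Fin n) (Fin n) ℝ)
  set D := Matrix.diagonal (Real.sqrt ∘ hP.posSemidef.1.eigenvalues)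
  have hUU : star U * U = 1 := (Unitary.mem_iff.mp hP.posSemidef.1.eigenvectorUnitary.2).1
  have hD : D * D = Matrix.diagonal hP.posSemidef.1.eigenvalues := by
    rw [Matrix.diagonal_mul_diagonal]
    congr 1
    funext i
    exact Real.mul_self_sqrt (hP.posSemidef.eigenvalues_nonneg i)
  conv_rhs => rw [real_spectral hP.posSemidef.1]
  calc U * D * star U * (U * D * star U) = U * (D * (star U * U) * D) * star U := by
        simp only [mul_assoc]
    _ = _ := by rw [hUU, mul_one, hD]

lemma sqrtPD_det (hP : P.PosDef) : IsUnit (sqrtPD P).det := by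
  have h : (sqrtPD P).det * (sqrtPD P).det = P.det := by
    rw [← Matrix.det_mul, sqrtPD_mul_self hP]
  have := hP.det_pos
  refine isUnit_iff_ne_zero.mpr fun h0 => ?_
  rw [h0, mul_zero] at h
  rw [← h] at this
  exact lt_irrefl _ this

lemma posDef_M (hP : P.PosDef) (hQ : Q.PosDef) :
    ((sqrtPD P)⁻¹ * Q * (sqrtPD P)⁻¹).PosDef :=
  posdef_conj hQ (sqrtPD_herm hP).inv
    (by rw [Matrix.det_nonsing_inv]; exact isUnit_ringInverse.mpr (sqrtPD_det hP))

lemma conj_sqrt_smul_sub (hP : P.PosDef) (hQ : Q.PosDef) (r : ℝ) :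
    r • P - Q = sqrtPD P * (r • (1 : Matrix (Fin n) (Fin n) ℝ) -
      (sqrtPD P)⁻¹ * Q * (sqrtPD P)⁻¹) * sqrtPD P := by
  set S := sqrtPD P
  have hdet := sqrtPD_det hP
  have hSMS : S * (S⁻¹ * Q * S⁻¹) * S = Q := by
    have e : S * (S⁻¹ * Q * S⁻¹) * S = S * S⁻¹ * Q * (S⁻¹ * S) := by
      simp only [mul_assoc]
    rw [e, Matrix.mul_nonsing_inv _ hdet, Matrix.nonsing_inv_mul _ hdet, one_mul, mul_one]
  rw [Matrix.mul_sub, Matrix.sub_mul, hSMS]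
  congr 1
  rw [mul_smul_comm, smul_mul_assoc, mul_one, sqrtPD_mul_self hP]

lemma psd_r_iff (hP : P.PosDef) (hQ : Q.PosDef) (r : ℝ) :
    (r • P - Q).PosSemidef ↔ ∀ i, (posDef_M hP hQ).1.eigenvalues i ≤ r := by
  rw [conj_sqrt_smul_sub hP hQ r, conj_herm_psd_iff (sqrtPD_herm hP) (sqrtPD_det hP),
    psd_smul_one_sub_iff (posDef_M hP hQ).1 r]

lemma psd_l_iff (hP : P.PosDef) (hQ : Q.PosDef) (r : ℝ) :
    (Q - r • P).PosSemidef ↔ ∀ i, r ≤ (posDef_M hP hQ).1.eigenvalues i := by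
  have key : Q - r • P = sqrtPD P * (((sqrtPD P)⁻¹ * Q * (sqrtPD P)⁻¹) -
      r • (1 : Matrix (Fin n) (Fin n) ℝ)) * sqrtPD P := by
    have h := conj_sqrt_smul_sub hP hQ r
    have : Q - r • P = -(r • P - Q) := (neg_sub _ _).symm
    rw [this, h, Matrix.mul_sub, Matrix.sub_mul, Matrix.mul_sub, Matrix.sub_mul, neg_sub]
  rw [key, conj_herm_psd_iff (sqrtPD_herm hP) (sqrtPD_det hP),
    psd_sub_smul_one_iff (posDef_M hP hQ).1 r]

lemma mlog_M_eq (hP : P.PosDef) (hQ : Q.PosDef) :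
    mlog ((sqrtPD P)⁻¹ * Q * (sqrtPD P)⁻¹) =
      ((posDef_M hP hQ).1.eigenvectorUnitary : Matrix (Fin n) (Fin n) ℝ) *
        Matrix.diagonal (Real.log ∘ (posDef_M hP hQ).1.eigenvalues) *
        star ((posDef_M hP hQ).1.eigenvectorUnitary : Matrix (Fin n) (Fin n) ℝ) := by
  simp only [mlog, dif_pos (posDef_M hP hQ).1]

lemma abs_log_le_thompson (hP : P.PosDef) (hQ : Q.PosDef) (i : Fin n) :
    |Real.log ((posDef_M hP hQ).1.eigenvalues i)| ≤ thompson P Q := by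
  have h := abs_le_opNorm_conj (posDef_M hP hQ).1.eigenvectorUnitary.2
    (Real.log ∘ (posDef_M hP hQ).1.eigenvalues) i
  rw [thompson, mlog_M_eq hP hQ]
  exact h

lemma thompson_le_of (hP : P.PosDef) (hQ : Q.PosDef) {s : ℝ} (hs : 0 ≤ s)
    (h : ∀ i, |Real.log ((posDef_M hP hQ).1.eigenvalues i)| ≤ s) : thompson P Q ≤ s := by
  rw [thompson, mlog_M_eq hP hQ]
  exact opNorm_conj_le (posDef_M hP hQ).1.eigenvectorUnitary.2 _ hs h

lemma thompson_nonneg (P Q : Matrix (Fin n) (Fin n) ℝ) : 0 ≤ thompson P Q := norm_nonneg _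

end Bridge

lemma step_psd {A P Q : Matrix (Fin n) (Fin n) ℝ} {α β a b : ℝ}
    (hα : 0 ≤ α) (hβ : 0 ≤ β) (ha : 0 ≤ a) (hb : 0 ≤ b) (hab : β * a = α * b)
    (h1 : (A - β • (1 : Matrix (Fin n) (Fin n) ℝ)).PosSemidef)
    (h2 : (Real.exp (a + b) • P - Q).PosSemidef)
    (h3 : (α • (1 : Matrix (Fin n) (Fin n) ℝ) - Q).PosSemidef) :
    (Real.exp a • (A + P) - (A + Q)).PosSemidef := by
  set δ : ℝ := (Real.exp (a + b) - Real.exp b) * β - (Real.exp b - 1) * α with hδdef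
  have hexp : Real.exp (a + b) = Real.exp a * Real.exp b := Real.exp_add a b
  have hea : a + 1 ≤ Real.exp a := Real.add_one_le_exp a
  have heb1 : 1 ≤ Real.exp b := Real.one_le_exp hb
  have hebpos : (0:ℝ) < Real.exp b := Real.exp_pos b
  have h5 : Real.exp b - 1 ≤ b * Real.exp b := by
    have hinv : Real.exp (-b) * Real.exp b = 1 := by
      rw [← Real.exp_add]; simp
    nlinarith [Real.add_one_le_exp (-b)]
  have hδ : 0 ≤ δ := by
    have hint1 : 0 ≤ β * Real.exp b * (Real.exp a - 1 - a) :=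
      mul_nonneg (mul_nonneg hβ hebpos.le) (by linarith)
    have hint2 : 0 ≤ α * (b * Real.exp b - (Real.exp b - 1)) :=
      mul_nonneg hα (by linarith)
    have habeb : β * a * Real.exp b = α * b * Real.exp b := by rw [hab]
    rw [hδdef, hexp]
    nlinarith
  have het_eb : 0 ≤ Real.exp (a + b) - Real.exp b := by
    have : Real.exp b ≤ Real.exp (a + b) := Real.exp_le_exp.mpr (by linarith)
    linarith
  have hW : (Real.exp (a + b) • (A + P) - Real.exp b • (A + Q)).PosSemidef := by
    have hid : Real.exp (a + b) • (A + P) - Real.exp b • (A + Q) =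
        (Real.exp (a + b) - Real.exp b) • (A - β • (1 : Matrix (Fin n) (Fin n) ℝ)) +
        (Real.exp (a + b) • P - Q) +
        (Real.exp b - 1) • (α • (1 : Matrix (Fin n) (Fin n) ℝ) - Q) +
        δ • (1 : Matrix (Fin n) (Fin n) ℝ) := by
      ext i j
      simp only [Matrix.sub_apply, Matrix.add_apply, Matrix.smul_apply, smul_eq_mul, hδdef]
      ring
    rw [hid]
    exact (((psd_smul het_eb h1).add h2).add (psd_smul (by linarith) h3)).add
      (psd_smul hδ Matrix.PosSemidef.one)
  have htarget : Real.exp a • (A + P) - (A + Q) =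
      Real.exp (-b) • (Real.exp (a + b) • (A + P) - Real.exp b • (A + Q)) := by
    rw [smul_sub, smul_smul, smul_smul, ← Real.exp_add, ← Real.exp_add,
      show -b + (a + b) = a by ring, show -b + b = 0 by ring, Real.exp_zero, one_smul]
  rw [htarget]
  exact psd_smul (Real.exp_pos (-b)).le hW


end Aux

/-- Contraction of the Thompson metric under translation by a PSD matrix. -/
theorem thompson_add_contraction {n : ℕ} (A X Y : Matrix (Fin n) (Fin n) ℝ)
    (hA : A.PosSemidef) (hX : X.PosDef) (hY : Y.PosDef) :
    thompson (A + X) (A + Y) ≤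
      (max (lamMax X) (lamMax Y)) / (max (lamMax X) (lamMax Y) + lamMin A) * thompson X Y := by
  set α := max (lamMax X) (lamMax Y) with hαdef
  set β := lamMin A with hβdef
  set t := thompson X Y with htdef
  have ht : 0 ≤ t := thompson_nonneg X Y
  have hα : 0 ≤ α := le_trans (lamMax_nonneg hX.posSemidef) (le_max_left _ _)
  have hβ : 0 ≤ β := lamMin_nonneg hA
  set c := α / (α + β) with hcdef
  have hc : 0 ≤ c := div_nonneg hα (by linarith)
  have hc1 : c ≤ 1 := by
    rcases eq_or_lt_of_le (show (0:ℝ) ≤ α + β by linarith) with h | h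
    · rw [hcdef, ← h, div_zero]; norm_num
    · rw [hcdef, div_le_one h]; linarith
  set a := c * t with hadef
  set b := t - c * t with hbdef
  have ha : 0 ≤ a := mul_nonneg hc ht
  have hb : 0 ≤ b := by
    have : c * t ≤ 1 * t := mul_le_mul_of_nonneg_right hc1 ht
    rw [hbdef]; linarith
  have hab' : a + b = t := by rw [hadef, hbdef]; ring
  have hab : β * a = α * b := by
    rcases eq_or_lt_of_le (show (0:ℝ) ≤ α + β by linarith) with h | h
    · have hα0 : α = 0 := by linarith
      have hβ0 : β = 0 := by linarith
      rw [hα0, hβ0]; ring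
    · rw [hadef, hbdef, hcdef]
      field_simp
      ring
  -- Loewner bounds between X and Y from t = thompson X Y
  have hμpos : ∀ i, 0 < (posDef_M hX hY).1.eigenvalues i := (posDef_M hX hY).eigenvalues_pos
  have h1 : ∀ i, |Real.log ((posDef_M hX hY).1.eigenvalues i)| ≤ t := abs_log_le_thompson hX hY
  have hXY : (Real.exp t • X - Y).PosSemidef :=
    (psd_r_iff hX hY _).mpr fun i =>
      (Real.log_le_iff_le_exp (hμpos i)).mp (le_of_abs_le (h1 i))
  have hYX' : (Y - Real.exp (-t) • X).PosSemidef :=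
    (psd_l_iff hX hY _).mpr fun i =>
      (Real.le_log_iff_exp_le (hμpos i)).mp (neg_le_of_abs_le (h1 i))
  have hYX : (Real.exp t • Y - X).PosSemidef := by
    have h2 := psd_smul (Real.exp_pos t).le hYX'
    have e : Real.exp t • (Y - Real.exp (-t) • X) = Real.exp t • Y - X := by
      rw [smul_sub, smul_smul, ← Real.exp_add, show t + -t = 0 by ring, Real.exp_zero, one_smul]
    rwa [e] at h2
  -- spectral bounds involving A
  have hAβ : (A - β • (1 : Matrix (Fin n) (Fin n) ℝ)).PosSemidef :=
    (psd_sub_smul_one_iff hA.1 β).mpr fun i => lamMin_le_eig hA.1 i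
  have hXα : (α • (1 : Matrix (Fin n) (Fin n) ℝ) - X).PosSemidef :=
    (psd_smul_one_sub_iff hX.1 α).mpr fun i => le_trans (eig_le_lamMax hX.1 i) (le_max_left _ _)
  have hYα : (α • (1 : Matrix (Fin n) (Fin n) ℝ) - Y).PosSemidef :=
    (psd_smul_one_sub_iff hY.1 α).mpr fun i => le_trans (eig_le_lamMax hY.1 i) (le_max_right _ _)
  -- the two one-sided bounds
  have s1 : (Real.exp a • (A + X) - (A + Y)).PosSemidef :=
    step_psd hα hβ ha hb hab hAβ (by rw [hab']; exact hXY) hYα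
  have s2 : (Real.exp a • (A + Y) - (A + X)).PosSemidef :=
    step_psd hα hβ ha hb hab hAβ (by rw [hab']; exact hYX) hXα
  have hAX : (A + X).PosDef := Matrix.PosDef.posSemidef_add hA hX
  have hAY : (A + Y).PosDef := Matrix.PosDef.posSemidef_add hA hY
  have hνpos : ∀ i, 0 < (posDef_M hAX hAY).1.eigenvalues i := (posDef_M hAX hAY).eigenvalues_pos
  have hup : ∀ i, (posDef_M hAX hAY).1.eigenvalues i ≤ Real.exp a := (psd_r_iff hAX hAY _).mp s1
  have s2' : ((A + Y) - Real.exp (-a) • (A + X)).PosSemidef := by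
    have h2 := psd_smul (Real.exp_pos (-a)).le s2
    have e : Real.exp (-a) • (Real.exp a • (A + Y) - (A + X)) =
        (A + Y) - Real.exp (-a) • (A + X) := by
      rw [smul_sub, smul_smul, ← Real.exp_add, show -a + a = 0 by ring, Real.exp_zero, one_smul]
    rwa [e] at h2
  have hlow : ∀ i, Real.exp (-a) ≤ (posDef_M hAX hAY).1.eigenvalues i :=
    (psd_l_iff hAX hAY _).mp s2'
  have final : thompson (A + X) (A + Y) ≤ a :=
    thompson_le_of hAX hAY ha fun i => abs_le.mpr
      ⟨(Real.le_log_iff_exp_le (hνpos i)).mpr (hlow i),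
       (Real.log_le_iff_le_exp (hνpos i)).mpr (hup i)⟩
  exact final
end

section
/- Consider the map f(X) = A + M(B + X^{-1})^{-1} Mᵀ, where A is positive definite, B is positive semidefinite, and M is a square matrix. For positive definite X, Y, δ_∞(f(X), f(Y)) ≤ (α/(λ_min(A) + α)) δ_∞(X, Y), where α = max{λ_max(MXMᵀ), λ_max(MYMᵀ)}. -/
open Matrix MeasureTheory ProbabilityTheory
open scoped Classical RealInnerProductSpace

set_option linter.unusedSectionVars false
set_option linter.unusedVariables false
set_option maxHeartbeats 1600000

open scoped Matrix.Norms.L2Operator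

namespace TAux
open Matrix
variable {m : Type*} [Fintype m] [DecidableEq m]

lemma herm_tr {P : Matrix m m ℝ} (h : P.IsHermitian) : Pᵀ = P := by
  rw [← conjTranspose_eq_transpose_of_trivial]; exact h.eq

lemma psd_dot {P : Matrix m m ℝ} (h : P.PosSemidef) (x : m → ℝ) :
    0 ≤ x ⬝ᵥ P *ᵥ x := by simpa using h.dotProduct_mulVec_nonneg x

lemma pd_det {P : Matrix m m ℝ} (h : P.PosDef) : IsUnit P.det :=
  h.det_pos.ne'.isUnit

lemma psd_smul {P : Matrix m m ℝ} (h : P.PosSemidef) {c : ℝ} (hc : 0 ≤ c) :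
    (c • P).PosSemidef := by
  refine posSemidef_iff_dotProduct_mulVec.mpr ⟨?_, fun x => ?_⟩
  · unfold Matrix.IsHermitian at *
    rw [conjTranspose_smul, h.1]; simp
  · rw [smul_mulVec, dotProduct_smul]
    have := h.dotProduct_mulVec_nonneg x
    simp only [star_trivial, smul_eq_mul] at *
    exact mul_nonneg hc this

lemma pd_smul {P : Matrix m m ℝ} (h : P.PosDef) {c : ℝ} (hc : 0 < c) :
    (c • P).PosDef := by
  refine posDef_iff_dotProduct_mulVec.mpr ⟨?_, fun x hx => ?_⟩
  · unfold Matrix.IsHermitian at *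
    rw [conjTranspose_smul, h.1]; simp
  · rw [smul_mulVec, dotProduct_smul]
    have := h.dotProduct_mulVec_pos hx
    simp only [star_trivial, smul_eq_mul] at *
    positivity

lemma psd_conj_t {P : Matrix m m ℝ} (h : P.PosSemidef) (M : Matrix m m ℝ) :
    (M * P * Mᵀ).PosSemidef := by
  have := h.mul_mul_conjTranspose_same M
  rwa [conjTranspose_eq_transpose_of_trivial] at this

lemma psd_isUnit_pd {S : Matrix m m ℝ} (h : S.PosSemidef) (hu : IsUnit S.det) :
    S.PosDef :=
  h.posDef_iff_isUnit.mpr ((isUnit_iff_isUnit_det _).mpr hu)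

lemma pd_conj' {P : Matrix m m ℝ} (h : P.PosDef) {M : Matrix m m ℝ} (hM : IsUnit M.det) :
    (M * P * Mᵀ).PosDef := by
  refine posDef_iff_dotProduct_mulVec.mpr ⟨?_, fun x hx => ?_⟩
  · have := (h.posSemidef.mul_mul_conjTranspose_same M).1
    simpa using this
  · have hx' : Mᵀ *ᵥ x ≠ 0 := by
      intro hc
      apply hx
      have h2 := congrArg (fun v => (Mᵀ)⁻¹ *ᵥ v) hc
      simp only [mulVec_mulVec, mulVec_zero] at h2
      rwa [Matrix.nonsing_inv_mul _ (by simpa using hM), one_mulVec] at h2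
    have hq := h.dotProduct_mulVec_pos hx'
    simp only [star_trivial] at hq ⊢
    calc (0:ℝ) < (Mᵀ *ᵥ x) ⬝ᵥ P *ᵥ Mᵀ *ᵥ x := hq
      _ = x ⬝ᵥ (M * P * Mᵀ) *ᵥ x := by
          rw [← mulVec_mulVec, ← mulVec_mulVec, dotProduct_mulVec x, ← Matrix.mulVec_transpose]

lemma inv_antitone {P Q : Matrix m m ℝ} (hP : P.PosDef) (hQ : Q.PosDef)
    (h : (Q - P).PosSemidef) : (P⁻¹ - Q⁻¹).PosSemidef := by
  have hPu : IsUnit P.det := pd_det hP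
  have hQu : IsUnit Q.det := pd_det hQ
  have hPi : P⁻¹.IsHermitian := hP.inv.isHermitian
  have hQi : Q⁻¹.IsHermitian := hQ.inv.isHermitian
  have key : P⁻¹ - Q⁻¹ = (P⁻¹ - Q⁻¹) * P * (P⁻¹ - Q⁻¹)ᵀ + Q⁻¹ * (Q - P) * (Q⁻¹)ᵀ := by
    have ht1 : (P⁻¹ - Q⁻¹)ᵀ = P⁻¹ - Q⁻¹ := by
      rw [transpose_sub, herm_tr hPi, herm_tr hQi]
    rw [ht1, herm_tr hQi]
    simp only [Matrix.sub_mul, Matrix.mul_sub]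
    rw [Matrix.nonsing_inv_mul _ hPu, Matrix.nonsing_inv_mul _ hQu,
      Matrix.mul_nonsing_inv_cancel_right _ _ hPu]
    simp only [Matrix.one_mul]
    abel
  have t1 := hP.posSemidef.mul_mul_conjTranspose_same (P⁻¹ - Q⁻¹)
  have t2 := h.mul_mul_conjTranspose_same (Q⁻¹)
  rw [conjTranspose_eq_transpose_of_trivial] at t1 t2
  rw [key]; exact t1.add t2

lemma spectral_real {S : Matrix m m ℝ} (hS : S.IsHermitian) :
    S = (hS.eigenvectorUnitary : Matrix m m ℝ) * diagonal hS.eigenvalues *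
      star (hS.eigenvectorUnitary : Matrix m m ℝ) := by
  conv_lhs => rw [hS.spectral_theorem]
  rw [Unitary.conjStarAlgAut_apply, RCLike.ofReal_real_eq_id, Function.id_comp]

lemma conj_diag_eq {S : Matrix m m ℝ} (hS : S.IsHermitian) (c : ℝ) :
    c • (1 : Matrix m m ℝ) - S =
      (hS.eigenvectorUnitary : Matrix m m ℝ) * diagonal (fun i => c - hS.eigenvalues i) *
        star (hS.eigenvectorUnitary : Matrix m m ℝ) := by
  have hUU : (hS.eigenvectorUnitary : Matrix m m ℝ) * star (hS.eigenvectorUnitary : Matrix m m ℝ)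
      = 1 := mem_unitaryGroup_iff.mp hS.eigenvectorUnitary.2
  have : diagonal (fun i => c - hS.eigenvalues i) =
      c • (1 : Matrix m m ℝ) - diagonal hS.eigenvalues := by
    rw [smul_one_eq_diagonal, ← diagonal_sub]
  rw [this, Matrix.mul_sub, Matrix.sub_mul, Matrix.mul_smul, Matrix.smul_mul, Matrix.mul_one, hUU,
    ← spectral_real hS]

lemma conj_diag_eq' {S : Matrix m m ℝ} (hS : S.IsHermitian) (c : ℝ) :
    S - c • (1 : Matrix m m ℝ) =
      (hS.eigenvectorUnitary : Matrix m m ℝ) * diagonal (fun i => hS.eigenvalues i - c) *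
        star (hS.eigenvectorUnitary : Matrix m m ℝ) := by
  have := conj_diag_eq hS c
  have h2 : diagonal (fun i => hS.eigenvalues i - c) =
      -diagonal (fun i => c - hS.eigenvalues i) := by
    have hf : (fun i => hS.eigenvalues i - c) = fun i => -(c - hS.eigenvalues i) := by
      funext i; ring
    rw [hf, diagonal_neg]
  rw [h2, Matrix.mul_neg, Matrix.neg_mul, ← this]; abel

lemma psd_conj_unitary {D : Matrix m m ℝ} (hD : D.PosSemidef) (U : unitary (Matrix m m ℝ)) :
    ((U : Matrix m m ℝ) * D * star (U : Matrix m m ℝ)).PosSemidef := by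
  have := hD.mul_mul_conjTranspose_same (U : Matrix m m ℝ)
  rwa [← star_eq_conjTranspose] at this

lemma smul_one_sub_psd {S : Matrix m m ℝ} (hS : S.IsHermitian) {c : ℝ}
    (h : ∀ i, hS.eigenvalues i ≤ c) : (c • (1 : Matrix m m ℝ) - S).PosSemidef := by
  rw [conj_diag_eq hS c]
  exact psd_conj_unitary (Matrix.PosSemidef.diagonal fun i => sub_nonneg.mpr (h i)) _

lemma sub_smul_one_psd {S : Matrix m m ℝ} (hS : S.IsHermitian) {c : ℝ}
    (h : ∀ i, c ≤ hS.eigenvalues i) : (S - c • (1 : Matrix m m ℝ)).PosSemidef := by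
  rw [conj_diag_eq' hS c]
  exact psd_conj_unitary (Matrix.PosSemidef.diagonal fun i => sub_nonneg.mpr (h i)) _

lemma eigenvector_dot {S : Matrix m m ℝ} (hS : S.IsHermitian) (i : m) :
    (⇑(hS.eigenvectorBasis i) : m → ℝ) ⬝ᵥ (⇑(hS.eigenvectorBasis i) : m → ℝ) = 1 := by
  have hn : ‖hS.eigenvectorBasis i‖ = 1 := hS.eigenvectorBasis.orthonormal.1 i
  have : ‖hS.eigenvectorBasis i‖ ^ 2 = 1 := by rw [hn]; norm_num
  rw [EuclideanSpace.norm_eq] at this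
  rw [Real.sq_sqrt (by positivity)] at this
  simpa [dotProduct, pow_two] using this

lemma eig_le_of_psd {S : Matrix m m ℝ} (hS : S.IsHermitian) {c : ℝ}
    (h : (c • (1 : Matrix m m ℝ) - S).PosSemidef) : ∀ i, hS.eigenvalues i ≤ c := by
  intro i
  have hq := h.dotProduct_mulVec_nonneg (⇑(hS.eigenvectorBasis i))
  set v : m → ℝ := ⇑(hS.eigenvectorBasis i) with hv
  have hmv : S *ᵥ v = hS.eigenvalues i • v := hS.mulVec_eigenvectorBasis i
  rw [sub_mulVec, smul_mulVec, one_mulVec, hmv] at hq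
  simp only [star_trivial, dotProduct_sub, dotProduct_smul] at hq
  rw [eigenvector_dot hS i] at hq
  simp only [smul_eq_mul, mul_one] at hq
  linarith

lemma le_eig_of_psd {S : Matrix m m ℝ} (hS : S.IsHermitian) {c : ℝ}
    (h : (S - c • (1 : Matrix m m ℝ)).PosSemidef) : ∀ i, c ≤ hS.eigenvalues i := by
  intro i
  have hq := h.dotProduct_mulVec_nonneg (⇑(hS.eigenvectorBasis i))
  set v : m → ℝ := ⇑(hS.eigenvectorBasis i) with hv
  have hmv : S *ᵥ v = hS.eigenvalues i • v := hS.mulVec_eigenvectorBasis i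
  rw [sub_mulVec, smul_mulVec, one_mulVec, hmv] at hq
  simp only [star_trivial, dotProduct_sub, dotProduct_smul] at hq
  rw [eigenvector_dot hS i] at hq
  simp only [smul_eq_mul, mul_one] at hq
  linarith

lemma spectrum_eq {S : Matrix m m ℝ} (hS : S.IsHermitian) :
    spectrum ℝ S = Set.range hS.eigenvalues := by
  conv_lhs => rw [spectral_real hS]
  rw [← spectrum_diagonal (R := ℝ) hS.eigenvalues]
  have h := spectrum.units_conjugate (R := ℝ) (a := diagonal hS.eigenvalues)
    (u := Unitary.toUnits hS.eigenvectorUnitary)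
  rw [← h]
  congr 1


lemma opNorm_eq (A : Matrix m m ℝ) : opNorm A = ‖A‖ := rfl

lemma opNorm_nonneg (A : Matrix m m ℝ) : 0 ≤ opNorm A := norm_nonneg _

lemma norm_unitary (U : unitary (Matrix m m ℝ)) : ‖(U : Matrix m m ℝ)‖ ≤ 1 := by
  have h1 : star (U : Matrix m m ℝ) * (U : Matrix m m ℝ) = 1 := U.2.1
  have h2 : ‖star (U : Matrix m m ℝ) * (U : Matrix m m ℝ)‖
      = ‖(U : Matrix m m ℝ)‖ * ‖(U : Matrix m m ℝ)‖ := CStarRing.norm_star_mul_self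
  have h3 : ‖(1 : Matrix m m ℝ)‖ ≤ 1 := by
    rw [Matrix.cstar_norm_def, _root_.map_one]
    exact ContinuousLinearMap.norm_id_le
  rw [h1] at h2
  nlinarith [norm_nonneg (U : Matrix m m ℝ)]

lemma opNorm_conj_le (U : unitary (Matrix m m ℝ)) (D : Matrix m m ℝ) :
    opNorm ((U : Matrix m m ℝ) * D * star (U : Matrix m m ℝ)) ≤ opNorm D := by
  simp only [opNorm_eq]
  calc ‖(U : Matrix m m ℝ) * D * star (U : Matrix m m ℝ)‖
      ≤ ‖(U : Matrix m m ℝ) * D‖ * ‖star (U : Matrix m m ℝ)‖ := Matrix.l2_opNorm_mul _ _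
    _ ≤ ‖(U : Matrix m m ℝ)‖ * ‖D‖ * ‖star (U : Matrix m m ℝ)‖ := by
        have := Matrix.l2_opNorm_mul (U : Matrix m m ℝ) D
        have h0 : (0:ℝ) ≤ ‖star (U : Matrix m m ℝ)‖ := norm_nonneg _
        nlinarith
    _ ≤ 1 * ‖D‖ * 1 := by
        have h1 := norm_unitary U
        have h2 := norm_unitary (star U)
        rw [Unitary.coe_star] at h2
        have hD : (0:ℝ) ≤ ‖D‖ := norm_nonneg _
        have h0' : (0:ℝ) ≤ ‖star (U : Matrix m m ℝ)‖ := norm_nonneg _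
        exact mul_le_mul (mul_le_mul h1 le_rfl hD zero_le_one) h2 h0' (by positivity)
    _ = ‖D‖ := by ring

lemma opNorm_conj (U : unitary (Matrix m m ℝ)) (D : Matrix m m ℝ) :
    opNorm ((U : Matrix m m ℝ) * D * star (U : Matrix m m ℝ)) = opNorm D := by
  refine le_antisymm (opNorm_conj_le U D) ?_
  have h1 : star (U : Matrix m m ℝ) * (U : Matrix m m ℝ) = 1 := U.2.1
  have key : star (U : Matrix m m ℝ) *
      ((U : Matrix m m ℝ) * D * star (U : Matrix m m ℝ)) * star (star (U : Matrix m m ℝ)) = D := by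
    rw [star_star]
    calc star (U : Matrix m m ℝ) * ((U : Matrix m m ℝ) * D * star (U : Matrix m m ℝ))
          * (U : Matrix m m ℝ)
        = (star (U : Matrix m m ℝ) * (U : Matrix m m ℝ)) * D *
            (star (U : Matrix m m ℝ) * (U : Matrix m m ℝ)) := by noncomm_ring
      _ = D := by rw [h1, Matrix.one_mul, Matrix.mul_one]
  have h := opNorm_conj_le (star U) ((U : Matrix m m ℝ) * D * star (U : Matrix m m ℝ))
  simp only [Unitary.coe_star] at h
  rwa [key] at h

lemma opNorm_diagonal_le {d : m → ℝ} {c : ℝ} (hc : 0 ≤ c) (h : ∀ i, |d i| ≤ c) :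
    opNorm (diagonal d) ≤ c := by
  rw [opNorm]
  refine ContinuousLinearMap.opNorm_le_bound _ hc fun x => ?_
  simp only [LinearMap.coe_toContinuousLinearMap']
  rw [toEuclideanLin_apply]
  rw [EuclideanSpace.norm_eq, EuclideanSpace.norm_eq]
  rw [← Real.sqrt_sq hc, ← Real.sqrt_mul (by positivity)]
  apply Real.sqrt_le_sqrt
  rw [Finset.mul_sum]
  apply Finset.sum_le_sum
  intro i _
  have hx : ((WithLp.equiv 2 (m → ℝ)).symm (diagonal d *ᵥ (WithLp.equiv 2 (m → ℝ)) x)) i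
      = d i * ((WithLp.equiv 2 (m → ℝ)) x) i := by
    simp [mulVec_diagonal]
  erw [hx]
  simp only [Real.norm_eq_abs, abs_mul]
  have h1 : |d i| ^ 2 ≤ c ^ 2 := by
    have := h i
    nlinarith [abs_nonneg (d i)]
  have h2 : (0:ℝ) ≤ |((WithLp.equiv 2 (m → ℝ)) x) i| ^ 2 := by positivity
  calc (|d i| * |(WithLp.equiv 2 (m → ℝ)) x i|) ^ 2
      = |d i| ^ 2 * |(WithLp.equiv 2 (m → ℝ)) x i| ^ 2 := by ring
    _ ≤ c ^ 2 * |(WithLp.equiv 2 (m → ℝ)) x i| ^ 2 := by nlinarith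
    _ = c ^ 2 * |((WithLp.equiv 2 (m → ℝ)) x) i| ^ 2 := rfl

lemma abs_le_opNorm_diagonal (d : m → ℝ) (i : m) : |d i| ≤ opNorm (diagonal d) := by
  have hb := (LinearMap.toContinuousLinearMap (Matrix.toEuclideanLin (diagonal d))).le_opNorm
    ((WithLp.equiv 2 (m → ℝ)).symm (Pi.single i 1))
  have hxn : ‖(WithLp.equiv 2 (m → ℝ)).symm (Pi.single i (1:ℝ))‖ = 1 := by
    rw [show (WithLp.equiv 2 (m → ℝ)).symm (Pi.single i (1:ℝ)) = EuclideanSpace.single i 1 from rfl]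
    simp [EuclideanSpace.norm_single]
  have happ : (LinearMap.toContinuousLinearMap (Matrix.toEuclideanLin (diagonal d)))
      ((WithLp.equiv 2 (m → ℝ)).symm (Pi.single i 1)) =
      (WithLp.equiv 2 (m → ℝ)).symm (Pi.single i (d i)) := by
    simp only [LinearMap.coe_toContinuousLinearMap']
    rw [toEuclideanLin_apply]
    congr 1
    rw [show ((WithLp.equiv 2 (m → ℝ)).symm (Pi.single i (1:ℝ))).ofLp = Pi.single i 1 from rfl]
    rw [diagonal_mulVec_single]
    funext j
    by_cases hj : j = i
    · subst hj; simp
    · simp [Pi.single, Function.update, hj]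
  rw [happ, hxn, mul_one, show (WithLp.equiv 2 (m → ℝ)).symm (Pi.single i (d i)) = EuclideanSpace.single i (d i) from rfl] at hb
  have : ‖EuclideanSpace.single i (d i)‖ = |d i| := by
    rw [EuclideanSpace.norm_single]; rfl
  rw [this] at hb
  exact hb




lemma lamMax_ge {S : Matrix m m ℝ} (hS : S.IsHermitian) (i : m) :
    hS.eigenvalues i ≤ lamMax S := by
  rw [lamMax, spectrum_eq hS]
  exact le_csSup (Set.finite_range _).bddAbove ⟨i, rfl⟩

lemma lamMin_le {A : Matrix m m ℝ} (hA : A.IsHermitian) (i : m) :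
    lamMin A ≤ hA.eigenvalues i := by
  rw [lamMin, spectrum_eq hA]
  exact csInf_le (Set.finite_range _).bddBelow ⟨i, rfl⟩

lemma lamMin_pos [Nonempty m] {A : Matrix m m ℝ} (hA : A.PosDef) : 0 < lamMin A := by
  rw [lamMin, spectrum_eq hA.isHermitian]
  obtain ⟨i, hi⟩ := (Set.range_nonempty hA.isHermitian.eigenvalues).csInf_mem
    (Set.finite_range _)
  rw [← hi]
  exact hA.eigenvalues_pos i

lemma lamMax_nonneg [Nonempty m] {S : Matrix m m ℝ} (hS : S.PosSemidef) : 0 ≤ lamMax S := by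
  have i : m := Classical.arbitrary m
  exact (hS.eigenvalues_nonneg i).trans (lamMax_ge hS.1 i)

lemma thompson_le_iff {P Q : Matrix m m ℝ} (hP : P.PosDef) (hQ : Q.PosDef) {s : ℝ} (hs : 0 ≤ s) :
    thompson P Q ≤ s ↔
      (Real.exp s • P - Q).PosSemidef ∧ (Real.exp s • Q - P).PosSemidef := by
  have hPsd := hP.posSemidef
  set W : Matrix m m ℝ := sqrtPD P with hWdef
  have hWpsd : W.PosSemidef := by
    rw [hWdef, sqrtPD, dif_pos hPsd]
    exact psd_conj_unitary (Matrix.PosSemidef.diagonal fun i => Real.sqrt_nonneg _) _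
  have hWW : W * W = P := by
    rw [hWdef, sqrtPD, dif_pos hPsd]
    have hUU : star (hPsd.1.eigenvectorUnitary : Matrix m m ℝ) *
        (hPsd.1.eigenvectorUnitary : Matrix m m ℝ) = 1 := Unitary.coe_star_mul_self _
    conv_rhs => rw [spectral_real hPsd.1]
    rw [show ∀ U D V : Matrix m m ℝ, U * D * V * (U * D * V) = U * (D * (V * U) * D) * V by
      intros; noncomm_ring, hUU, Matrix.mul_one, diagonal_mul_diagonal]
    congr 3
    funext i
    exact Real.mul_self_sqrt (hPsd.eigenvalues_nonneg i)
  have hWdet : IsUnit W.det := by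
    have : W.det * W.det = P.det := by rw [← det_mul, hWW]
    have hPdet := hP.det_pos
    refine isUnit_iff_ne_zero.mpr fun hc => ?_
    rw [hc, mul_zero] at this
    exact hPdet.ne this
  have hWpd : W.PosDef := psd_isUnit_pd hWpsd hWdet
  set R : Matrix m m ℝ := W⁻¹ with hRdef
  have hRpd : R.PosDef := hWpd.inv
  have hRtr : Rᵀ = R := herm_tr hRpd.isHermitian
  have hRW : R * W = 1 := Matrix.nonsing_inv_mul _ hWdet
  have hWR : W * R = 1 := Matrix.mul_nonsing_inv _ hWdet
  set S : Matrix m m ℝ := R * Q * R with hSdef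
  have hSpd : S.PosDef := by
    have := pd_conj' hQ (M := R) (pd_det hRpd)
    rwa [hRtr] at this
  have hSherm : S.IsHermitian := hSpd.isHermitian
  have hRPR : R * P * R = 1 := by
    rw [← hWW]
    calc R * (W * W) * R = (R * W) * (W * R) := by noncomm_ring
      _ = 1 := by rw [hRW, hWR, Matrix.one_mul]
  have hWSW : W * S * W = Q := by
    calc W * (R * Q * R) * W = (W * R) * Q * (R * W) := by noncomm_ring
      _ = Q := by rw [hWR, hRW, Matrix.one_mul, Matrix.mul_one]
  -- norm characterization
  have hth : thompson P Q = opNorm (mlog S) := rfl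
  have hmlog : mlog S = (hSherm.eigenvectorUnitary : Matrix m m ℝ) *
      diagonal (Real.log ∘ hSherm.eigenvalues) *
      star (hSherm.eigenvectorUnitary : Matrix m m ℝ) := dif_pos hSherm
  have hnorm : thompson P Q = opNorm (diagonal (Real.log ∘ hSherm.eigenvalues)) := by
    rw [hth, hmlog, opNorm_conj hSherm.eigenvectorUnitary]
  have heigpos : ∀ i, 0 < hSherm.eigenvalues i := fun i => hSpd.eigenvalues_pos i
  have key1 : thompson P Q ≤ s ↔ ∀ i, |Real.log (hSherm.eigenvalues i)| ≤ s := by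
    constructor
    · intro h i
      exact (abs_le_opNorm_diagonal (Real.log ∘ hSherm.eigenvalues) i).trans (by rwa [← hnorm])
    · intro h
      rw [hnorm]
      exact opNorm_diagonal_le hs fun i => h i
  have key2 : (∀ i, |Real.log (hSherm.eigenvalues i)| ≤ s) ↔
      (∀ i, hSherm.eigenvalues i ≤ Real.exp s) ∧
      (∀ i, Real.exp (-s) ≤ hSherm.eigenvalues i) := by
    constructor
    · intro h
      refine ⟨fun i => ?_, fun i => ?_⟩
      · have := (abs_le.mp (h i)).2
        rwa [Real.log_le_iff_le_exp (heigpos i)] at this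
      · have := (abs_le.mp (h i)).1
        exact (Real.le_log_iff_exp_le (heigpos i)).mp this
    · rintro ⟨h1, h2⟩ i
      rw [abs_le]
      constructor
      · exact (Real.le_log_iff_exp_le (heigpos i)).mpr (h2 i)
      · rw [Real.log_le_iff_le_exp (heigpos i)]
        exact h1 i
  -- transfer upper
  have keyU : (∀ i, hSherm.eigenvalues i ≤ Real.exp s) ↔ (Real.exp s • P - Q).PosSemidef := by
    constructor
    · intro h
      have hpsd := smul_one_sub_psd hSherm h
      have := hpsd.mul_mul_conjTranspose_same W
      rw [conjTranspose_eq_transpose_of_trivial, herm_tr hWpsd.1] at this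
      have heq : W * (Real.exp s • (1 : Matrix m m ℝ) - S) * W = Real.exp s • P - Q := by
        rw [Matrix.mul_sub, Matrix.sub_mul, Matrix.mul_smul, Matrix.smul_mul, Matrix.mul_one,
          hWW, hWSW]
      rwa [heq] at this
    · intro h
      have := h.mul_mul_conjTranspose_same R
      rw [conjTranspose_eq_transpose_of_trivial, hRtr] at this
      have heq : R * (Real.exp s • P - Q) * R = Real.exp s • (1 : Matrix m m ℝ) - S := by
        rw [Matrix.mul_sub, Matrix.sub_mul, Matrix.mul_smul, Matrix.smul_mul, hRPR, ← hSdef]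
      rw [heq] at this
      exact eig_le_of_psd hSherm this
  -- transfer lower
  have keyL : (∀ i, Real.exp (-s) ≤ hSherm.eigenvalues i) ↔ (Real.exp s • Q - P).PosSemidef := by
    have hes : Real.exp s * Real.exp (-s) = 1 := by rw [← Real.exp_add]; simp
    have hes' : Real.exp (-s) * Real.exp s = 1 := by rw [← Real.exp_add]; simp
    constructor
    · intro h
      have hpsd := sub_smul_one_psd hSherm h
      have hsc := psd_smul hpsd (le_of_lt (Real.exp_pos s))
      have heq0 : Real.exp s • (S - Real.exp (-s) • (1 : Matrix m m ℝ))
          = Real.exp s • S - (1 : Matrix m m ℝ) := by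
        rw [smul_sub, smul_smul, hes, one_smul]
      rw [heq0] at hsc
      have := hsc.mul_mul_conjTranspose_same W
      rw [conjTranspose_eq_transpose_of_trivial, herm_tr hWpsd.1] at this
      have heq : W * (Real.exp s • S - (1 : Matrix m m ℝ)) * W = Real.exp s • Q - P := by
        rw [Matrix.mul_sub, Matrix.sub_mul, Matrix.mul_smul, Matrix.smul_mul, Matrix.mul_one,
          hWSW, hWW]
      rwa [heq] at this
    · intro h
      have := h.mul_mul_conjTranspose_same R
      rw [conjTranspose_eq_transpose_of_trivial, hRtr] at this
      have heq : R * (Real.exp s • Q - P) * R = Real.exp s • S - (1 : Matrix m m ℝ) := by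
        rw [Matrix.mul_sub, Matrix.sub_mul, Matrix.mul_smul, Matrix.smul_mul, hRPR, ← hSdef]
      rw [heq] at this
      have hsc := psd_smul this (le_of_lt (Real.exp_pos (-s)))
      have heq0 : Real.exp (-s) • (Real.exp s • S - (1 : Matrix m m ℝ))
          = S - Real.exp (-s) • (1 : Matrix m m ℝ) := by
        rw [smul_sub, smul_smul, hes', one_smul]
      rw [heq0] at hsc
      exact le_eig_of_psd hSherm hsc
  rw [key1, key2, keyU, keyL]



lemma riccati_step (A B M X Y : Matrix m m ℝ)
    (hA : A.PosDef) (hB : B.PosSemidef) (hX : X.PosDef) (hY : Y.PosDef)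
    {a α r : ℝ} (ha : 0 < a) (hα : 0 ≤ α) (hr : 0 ≤ r)
    (haA : (A - a • (1 : Matrix m m ℝ)).PosSemidef)
    (hαY : (α • (1 : Matrix m m ℝ) - M * Y * Mᵀ).PosSemidef)
    (hXY : (Real.exp r • X - Y).PosSemidef) :
    (Real.exp (α / (a + α) * r) • (A + M * (B + X⁻¹)⁻¹ * Mᵀ) -
      (A + M * (B + Y⁻¹)⁻¹ * Mᵀ)).PosSemidef := by
  set γ : ℝ := α / (a + α) with hγdef
  have haα : 0 < a + α := by linarith
  have hγ0 : 0 ≤ γ := div_nonneg hα haα.le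
  have hγ1 : γ ≤ 1 := by rw [hγdef, div_le_one haα]; linarith
  set g : ℝ := γ * r with hgdef
  have hg0 : 0 ≤ g := mul_nonneg hγ0 hr
  have hgr : g ≤ r := by
    rw [hgdef]
    nlinarith
  have hXi : X⁻¹.PosDef := hX.inv
  have hYi : Y⁻¹.PosDef := hY.inv
  have hBX : (B + X⁻¹).PosDef := Matrix.PosDef.posSemidef_add hB hXi
  have hBY : (B + Y⁻¹).PosDef := Matrix.PosDef.posSemidef_add hB hYi
  have her : (0:ℝ) < Real.exp r := Real.exp_pos r
  have hexpr1 : Real.exp (-r) ≤ 1 := by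
    rw [← Real.exp_zero]
    exact Real.exp_le_exp.mpr (by linarith)
  -- step 1: Y⁻¹ ≥ exp (-r) • X⁻¹
  have hsmulXpd : (Real.exp r • X).PosDef := pd_smul hX her
  have h1 : (Real.exp r • X)⁻¹ = Real.exp (-r) • X⁻¹ := by
    apply Matrix.inv_eq_left_inv
    rw [Matrix.smul_mul, Matrix.mul_smul, Matrix.nonsing_inv_mul _ (pd_det hX), smul_smul,
      ← Real.exp_add]
    norm_num
  have h2 := inv_antitone hY hsmulXpd hXY
  rw [h1] at h2
  -- step 2
  have hBr : ((1 - Real.exp (-r)) • B).PosSemidef := psd_smul hB (by linarith)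
  have h3 : ((B + Y⁻¹) - Real.exp (-r) • (B + X⁻¹)).PosSemidef := by
    have hsum := hBr.add h2
    have heq : (1 - Real.exp (-r)) • B + (Y⁻¹ - Real.exp (-r) • X⁻¹)
        = (B + Y⁻¹) - Real.exp (-r) • (B + X⁻¹) := by
      rw [smul_add, sub_smul, one_smul]; abel
    rwa [heq] at hsum
  -- step 3: invert
  have hsmulBXpd : (Real.exp (-r) • (B + X⁻¹)).PosDef := pd_smul hBX (Real.exp_pos _)
  have h4 := inv_antitone hsmulBXpd hBY h3
  have h5 : (Real.exp (-r) • (B + X⁻¹))⁻¹ = Real.exp r • (B + X⁻¹)⁻¹ := by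
    apply Matrix.inv_eq_left_inv
    rw [Matrix.smul_mul, Matrix.mul_smul, Matrix.nonsing_inv_mul _ (pd_det hBX), smul_smul,
      ← Real.exp_add]
    norm_num
  rw [h5] at h4
  have h6 : (Real.exp r • (M * (B + X⁻¹)⁻¹ * Mᵀ) - M * (B + Y⁻¹)⁻¹ * Mᵀ).PosSemidef := by
    have hc := psd_conj_t h4 M
    have heq : M * (Real.exp r • (B + X⁻¹)⁻¹ - (B + Y⁻¹)⁻¹) * Mᵀ
        = Real.exp r • (M * (B + X⁻¹)⁻¹ * Mᵀ) - M * (B + Y⁻¹)⁻¹ * Mᵀ := by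
      rw [Matrix.mul_sub, Matrix.sub_mul, Matrix.mul_smul, Matrix.smul_mul]
    rwa [heq] at hc
  -- step 4 : M (B+Y⁻¹)⁻¹ Mᵀ ≤ α I
  have h7 : (Y - (B + Y⁻¹)⁻¹).PosSemidef := by
    have hsub : ((B + Y⁻¹) - Y⁻¹).PosSemidef := by
      have heq : (B + Y⁻¹) - Y⁻¹ = B := by abel
      rw [heq]; exact hB
    have hi := inv_antitone hYi hBY hsub
    rwa [Matrix.nonsing_inv_nonsing_inv _ (pd_det hY)] at hi
  have h8 : (α • (1 : Matrix m m ℝ) - M * (B + Y⁻¹)⁻¹ * Mᵀ).PosSemidef := by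
    have hMY := psd_conj_t h7 M
    have heq : M * (Y - (B + Y⁻¹)⁻¹) * Mᵀ = M * Y * Mᵀ - M * (B + Y⁻¹)⁻¹ * Mᵀ := by
      rw [Matrix.mul_sub, Matrix.sub_mul]
    rw [heq] at hMY
    have hsum := hαY.add hMY
    have heq2 : α • (1 : Matrix m m ℝ) - M * Y * Mᵀ + (M * Y * Mᵀ - M * (B + Y⁻¹)⁻¹ * Mᵀ)
        = α • (1 : Matrix m m ℝ) - M * (B + Y⁻¹)⁻¹ * Mᵀ := by abel
    rwa [heq2] at hsum
  -- scalar inequality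
  have hscal : 0 ≤ (Real.exp g - 1) * a - (1 - Real.exp (g - r)) * α := by
    have he1 := Real.add_one_le_exp g
    have he2 := Real.add_one_le_exp (g - r)
    have hid : a * g = α * (r - g) := by
      rw [hgdef, hγdef]
      field_simp
      ring
    nlinarith
  have hg1 : (1:ℝ) ≤ Real.exp g := by
    rw [← Real.exp_zero]
    exact Real.exp_le_exp.mpr hg0
  have hgr1 : Real.exp (g - r) ≤ 1 := by
    rw [← Real.exp_zero]
    exact Real.exp_le_exp.mpr (by linarith)
  -- assemble
  have hT1 : (Real.exp (g - r) •
      (Real.exp r • (M * (B + X⁻¹)⁻¹ * Mᵀ) - M * (B + Y⁻¹)⁻¹ * Mᵀ)).PosSemidef :=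
    psd_smul h6 (Real.exp_pos _).le
  have hT2 : ((Real.exp g - 1) • (A - a • (1 : Matrix m m ℝ))).PosSemidef :=
    psd_smul haA (by linarith)
  have hT3 : ((1 - Real.exp (g - r)) •
      (α • (1 : Matrix m m ℝ) - M * (B + Y⁻¹)⁻¹ * Mᵀ)).PosSemidef :=
    psd_smul h8 (by linarith)
  have hT4 : (((Real.exp g - 1) * a - (1 - Real.exp (g - r)) * α) •
      (1 : Matrix m m ℝ)).PosSemidef :=
    psd_smul Matrix.PosSemidef.one hscal
  have hsum := ((hT1.add hT2).add hT3).add hT4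
  have hexpg : Real.exp (g - r) * Real.exp r = Real.exp g := by
    rw [← Real.exp_add]; ring_nf
  have heqG : Real.exp (g - r) •
        (Real.exp r • (M * (B + X⁻¹)⁻¹ * Mᵀ) - M * (B + Y⁻¹)⁻¹ * Mᵀ) +
        (Real.exp g - 1) • (A - a • (1 : Matrix m m ℝ)) +
        (1 - Real.exp (g - r)) • (α • (1 : Matrix m m ℝ) - M * (B + Y⁻¹)⁻¹ * Mᵀ) +
        ((Real.exp g - 1) * a - (1 - Real.exp (g - r)) * α) • (1 : Matrix m m ℝ)
      = Real.exp g • (A + M * (B + X⁻¹)⁻¹ * Mᵀ) - (A + M * (B + Y⁻¹)⁻¹ * Mᵀ) := by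
    rw [← hexpg]
    module
  rwa [heqG] at hsum

end TAux

/-- Thompson-metric contraction of the Riccati-type map `X ↦ A + M (B + X⁻¹)⁻¹ Mᵀ`. -/
theorem thompson_riccati_contraction {n : ℕ} (A B M X Y : Matrix (Fin n) (Fin n) ℝ)
    (hA : A.PosDef) (hB : B.PosSemidef) (hX : X.PosDef) (hY : Y.PosDef) :
    thompson (A + M * (B + X⁻¹)⁻¹ * Mᵀ) (A + M * (B + Y⁻¹)⁻¹ * Mᵀ) ≤
      (max (lamMax (M * X * Mᵀ)) (lamMax (M * Y * Mᵀ))) /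
        (lamMin A + max (lamMax (M * X * Mᵀ)) (lamMax (M * Y * Mᵀ))) * thompson X Y := by
  
  rcases isEmpty_or_nonempty (Fin n) with hn | hn
  · have h0 : ∀ Z W : Matrix (Fin n) (Fin n) ℝ, thompson Z W = 0 := by
      intro Z W
      have hz : mlog ((sqrtPD Z)⁻¹ * W * (sqrtPD Z)⁻¹) = 0 := by
        ext i j
        exact hn.elim i
      rw [thompson, hz, opNorm]
      simp only [map_zero, norm_zero]
    rw [h0, h0]
    simp
  · set a : ℝ := lamMin A with hadef
    set α : ℝ := max (lamMax (M * X * Mᵀ)) (lamMax (M * Y * Mᵀ)) with hαdef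
    have ha : 0 < a := TAux.lamMin_pos hA
    have hMX : (M * X * Mᵀ).PosSemidef := TAux.psd_conj_t hX.posSemidef M
    have hMY : (M * Y * Mᵀ).PosSemidef := TAux.psd_conj_t hY.posSemidef M
    have hα : 0 ≤ α := le_trans (TAux.lamMax_nonneg hMX) (le_max_left _ _)
    set r : ℝ := thompson X Y with hrdef
    have hr : 0 ≤ r := norm_nonneg _
    have hXYord := (TAux.thompson_le_iff hX hY hr).mp le_rfl
    have haA : (A - a • (1 : Matrix (Fin n) (Fin n) ℝ)).PosSemidef :=
      TAux.sub_smul_one_psd hA.isHermitian fun i => TAux.lamMin_le hA.isHermitian i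
    have hαX : (α • (1 : Matrix (Fin n) (Fin n) ℝ) - M * X * Mᵀ).PosSemidef :=
      TAux.smul_one_sub_psd hMX.isHermitian fun i =>
        (TAux.lamMax_ge hMX.isHermitian i).trans (le_max_left _ _)
    have hαY : (α • (1 : Matrix (Fin n) (Fin n) ℝ) - M * Y * Mᵀ).PosSemidef :=
      TAux.smul_one_sub_psd hMY.isHermitian fun i =>
        (TAux.lamMax_ge hMY.isHermitian i).trans (le_max_right _ _)
    have step1 := TAux.riccati_step A B M X Y hA hB hX hY ha hα hr haA hαY hXYord.1
    have step2 := TAux.riccati_step A B M Y X hA hB hY hX ha hα hr haA hαX hXYord.2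
    have hfX : (A + M * (B + X⁻¹)⁻¹ * Mᵀ).PosDef :=
      hA.add_posSemidef (TAux.psd_conj_t (Matrix.PosDef.posSemidef_add hB hX.inv).inv.posSemidef M)
    have hfY : (A + M * (B + Y⁻¹)⁻¹ * Mᵀ).PosDef :=
      hA.add_posSemidef (TAux.psd_conj_t (Matrix.PosDef.posSemidef_add hB hY.inv).inv.posSemidef M)
    have hs0 : 0 ≤ α / (a + α) * r :=
      mul_nonneg (div_nonneg hα (by linarith)) hr
    exact (TAux.thompson_le_iff hfX hfY hs0).mpr ⟨step1, step2⟩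
end

section
/- Suppose A and B are positive definite n×n matrices with A ⪰ μI and B ⪰ μI for some μ > 0. Then δ_∞(A,B) ≤ ‖A−B‖/μ. -/
open Matrix MeasureTheory ProbabilityTheory
open scoped Classical RealInnerProductSpace

section Aux

open scoped Matrix.Norms.L2Operator

lemma opNorm_eq_l2norm {n : Type*} [Fintype n] [DecidableEq n] (A : Matrix n n ℝ) :
    opNorm A = ‖A‖ := rfl

set_option maxHeartbeats 1000000 in
lemma l2norm_diagonal_le {n : Type*} [Fintype n] [DecidableEq n] (d : n → ℝ) (c : ℝ)
    (hc : 0 ≤ c) (h : ∀ i, |d i| ≤ c) : ‖Matrix.diagonal d‖ ≤ c := by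
  rw [Matrix.l2_opNorm_def]
  refine ContinuousLinearMap.opNorm_le_bound _ hc fun x => ?_
  have hx : (Matrix.toEuclideanLin ≪≫ₗ LinearMap.toContinuousLinearMap)
      (Matrix.diagonal d) x = (WithLp.equiv 2 (n → ℝ)).symm
        (fun i => d i * (WithLp.equiv 2 (n → ℝ)) x i) := by
    rw [LinearEquiv.trans_apply]
    simp only [LinearMap.coe_toContinuousLinearMap', Matrix.toEuclideanLin_apply]
    congr 1
    ext i
    simp [Matrix.mulVec_diagonal]
  rw [hx, EuclideanSpace.norm_eq, EuclideanSpace.norm_eq, ← Real.sqrt_sq hc,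
    ← Real.sqrt_mul (sq_nonneg c)]
  apply Real.sqrt_le_sqrt
  rw [Finset.mul_sum]
  refine Finset.sum_le_sum fun i _ => ?_
  simp only [Real.norm_eq_abs]
  change |d i * x.ofLp i| ^ 2 ≤ c ^ 2 * |x.ofLp i| ^ 2
  rw [abs_mul, mul_pow]
  have hd2 : |d i| ^ 2 ≤ c ^ 2 := by nlinarith [h i, abs_nonneg (d i)]
  exact mul_le_mul_of_nonneg_right hd2 (by positivity)

lemma abs_dot_le_l2norm {n : Type*} [Fintype n] [DecidableEq n] (M : Matrix n n ℝ)
    (y : n → ℝ) : |y ⬝ᵥ (M *ᵥ y)| ≤ ‖M‖ * (y ⬝ᵥ y) := by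
  set x : EuclideanSpace ℝ n := (WithLp.equiv 2 (n → ℝ)).symm y with hxdef
  set w : EuclideanSpace ℝ n := (WithLp.equiv 2 (n → ℝ)).symm (M *ᵥ y) with hwdef
  have hinner : ⟪x, w⟫ = y ⬝ᵥ (M *ᵥ y) := by
    simp [PiLp.inner_apply, RCLike.inner_apply, dotProduct, hxdef, hwdef]
    exact Finset.sum_congr rfl fun i _ => mul_comm _ _
  have hself : ⟪x, x⟫ = y ⬝ᵥ y := by
    simp [PiLp.inner_apply, RCLike.inner_apply, dotProduct, hxdef]
    rw [EuclideanSpace.norm_sq_eq]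
    exact Finset.sum_congr rfl fun i _ => by simp [sq]
  have hnw : ‖w‖ ≤ ‖M‖ * ‖x‖ := M.l2_opNorm_mulVec x
  have hcs : |⟪x, w⟫| ≤ ‖x‖ * ‖w‖ := abs_real_inner_le_norm x w
  have hxx : ‖x‖ * ‖x‖ = y ⬝ᵥ y := by
    rw [← real_inner_self_eq_norm_mul_norm, hself]
  calc |y ⬝ᵥ (M *ᵥ y)| = |⟪x, w⟫| := by rw [hinner]
    _ ≤ ‖x‖ * ‖w‖ := hcs
    _ ≤ ‖x‖ * (‖M‖ * ‖x‖) :=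
        mul_le_mul_of_nonneg_left hnw (norm_nonneg x)
    _ = ‖M‖ * (‖x‖ * ‖x‖) := by ring
    _ = ‖M‖ * (y ⬝ᵥ y) := by rw [hxx]

lemma quad_lower {n : Type*} [Fintype n] [DecidableEq n] {M : Matrix n n ℝ} {μ : ℝ}
    (hMμ : (M - μ • (1 : Matrix n n ℝ)).PosSemidef) (y : n → ℝ) :
    μ * (y ⬝ᵥ y) ≤ y ⬝ᵥ (M *ᵥ y) := by
  have h := hMμ.dotProduct_mulVec_nonneg y
  simp only [star_trivial, Matrix.sub_mulVec, Matrix.smul_mulVec, Matrix.one_mulVec,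
    dotProduct_sub, dotProduct_smul, smul_eq_mul] at h
  linarith

end Aux

set_option maxHeartbeats 1000000 in
open scoped Matrix.Norms.L2Operator in
/-- Upper bound of the Thompson metric by the operator norm of the difference. -/
theorem thompson_le_opNorm_div {n : ℕ} (μ : ℝ) (hμ : 0 < μ)
    (A B : Matrix (Fin n) (Fin n) ℝ) (hA : A.PosDef) (hB : B.PosDef)
    (hAμ : (A - μ • (1 : Matrix (Fin n) (Fin n) ℝ)).PosSemidef)
    (hBμ : (B - μ • (1 : Matrix (Fin n) (Fin n) ℝ)).PosSemidef) :
    thompson A B ≤ opNorm (A - B) / μ := by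
  have hAps : A.PosSemidef := hA.posSemidef
  set S : Matrix (Fin n) (Fin n) ℝ := sqrtPD A with hSdef
  have hS_eq : S = (hAps.1.eigenvectorUnitary : Matrix (Fin n) (Fin n) ℝ) *
      Matrix.diagonal (Real.sqrt ∘ hAps.1.eigenvalues) *
      (star (hAps.1.eigenvectorUnitary : Matrix (Fin n) (Fin n) ℝ)) := by
    rw [hSdef, sqrtPD, dif_pos hAps]
  have hSps : S.PosSemidef := by
    rw [hS_eq]
    exact (Matrix.PosSemidef.diagonal fun i => Real.sqrt_nonneg _).mul_mul_conjTranspose_same _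
  have hSS : S * S = A := by
    have hU : star (hAps.1.eigenvectorUnitary : Matrix (Fin n) (Fin n) ℝ) *
        (hAps.1.eigenvectorUnitary : Matrix (Fin n) (Fin n) ℝ) = 1 :=
      Unitary.star_mul_self_of_mem (hAps.1.eigenvectorUnitary).2
    rw [hS_eq]
    conv_rhs => rw [hAps.1.spectral_theorem, Unitary.conjStarAlgAut_apply]
    calc _ = (hAps.1.eigenvectorUnitary : Matrix (Fin n) (Fin n) ℝ) *
          (Matrix.diagonal (Real.sqrt ∘ hAps.1.eigenvalues) *
          (star (hAps.1.eigenvectorUnitary : Matrix (Fin n) (Fin n) ℝ) *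
          (hAps.1.eigenvectorUnitary : Matrix (Fin n) (Fin n) ℝ)) *
          Matrix.diagonal (Real.sqrt ∘ hAps.1.eigenvalues)) *
          (star (hAps.1.eigenvectorUnitary : Matrix (Fin n) (Fin n) ℝ)) := by
          simp only [Matrix.mul_assoc]
      _ = _ := by
          rw [hU, Matrix.mul_one, Matrix.diagonal_mul_diagonal]
          congr 2
          ext i
          simp [Matrix.diagonal_apply, Real.mul_self_sqrt (hAps.eigenvalues_nonneg i)]
  have hdetS : IsUnit S.det := by
    have hd : S.det * S.det = A.det := by rw [← Matrix.det_mul, hSS]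
    have hApos : 0 < A.det := hA.det_pos
    refine isUnit_iff_ne_zero.mpr fun h0 => ?_
    rw [h0, mul_zero] at hd
    exact absurd hd.symm (ne_of_gt hApos)
  have hSinv : S * S⁻¹ = 1 := Matrix.mul_nonsing_inv _ hdetS
  have hSinv' : S⁻¹ * S = 1 := Matrix.nonsing_inv_mul _ hdetS
  have hSherm : Sᴴ = S := hSps.1
  have hSinvHerm : (S⁻¹)ᴴ = S⁻¹ := by
    rw [Matrix.conjTranspose_nonsing_inv, hSherm]
  set C : Matrix (Fin n) (Fin n) ℝ := S⁻¹ * B * S⁻¹ with hCdef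
  -- C is positive definite
  have hC : C.PosDef := by
    refine Matrix.PosDef.of_dotProduct_mulVec_pos ?_ ?_
    · show Cᴴ = C
      rw [hCdef, Matrix.conjTranspose_mul, Matrix.conjTranspose_mul, hSinvHerm,
        hB.isHermitian.eq, Matrix.mul_assoc]
    · intro x hx
      have hy : S⁻¹ *ᵥ x ≠ 0 := by
        intro h0
        apply hx
        have : S *ᵥ (S⁻¹ *ᵥ x) = x := by
          rw [Matrix.mulVec_mulVec, hSinv, Matrix.one_mulVec]
        rw [h0, Matrix.mulVec_zero] at this
        exact this.symm
      have key : star x ⬝ᵥ (C *ᵥ x)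
          = star (S⁻¹ *ᵥ x) ⬝ᵥ (B *ᵥ (S⁻¹ *ᵥ x)) := by
        simp only [star_trivial]
        rw [hCdef, ← Matrix.mulVec_mulVec, ← Matrix.mulVec_mulVec,
          Matrix.dotProduct_mulVec x S⁻¹, ← Matrix.mulVec_transpose]
        congr 1
        have : S⁻¹ᵀ = S⁻¹ := hSinvHerm
        rw [this]
      rw [key]
      exact hB.dotProduct_mulVec_pos hy
  have hCherm : C.IsHermitian := hC.1
  -- the eigenvalue bound
  set N : ℝ := ‖A - B‖ with hNdef
  have hN : 0 ≤ N := norm_nonneg _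
  have hr : 0 ≤ N / μ := div_nonneg hN hμ.le
  have heig : ∀ i, |Real.log (hCherm.eigenvalues i)| ≤ N / μ := by
    intro i
    set lam : ℝ := hCherm.eigenvalues i with hlamdef
    have hlam : 0 < lam := hC.eigenvalues_pos i
    set v : Fin n → ℝ := ⇑(hCherm.eigenvectorBasis i) with hvdef
    have hCv : C *ᵥ v = lam • v := hCherm.mulVec_eigenvectorBasis i
    have hvne : v ≠ 0 := by
      intro h0
      have h1 : ‖hCherm.eigenvectorBasis i‖ = 1 :=
        hCherm.eigenvectorBasis.orthonormal.1 i
      have : (hCherm.eigenvectorBasis i) = 0 := by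
        ext j
        exact congrFun h0 j
      rw [this, norm_zero] at h1
      exact zero_ne_one h1
    set y : Fin n → ℝ := S⁻¹ *ᵥ v with hydef
    have hyne : y ≠ 0 := by
      intro h0
      apply hvne
      have : S *ᵥ (S⁻¹ *ᵥ v) = v := by
        rw [Matrix.mulVec_mulVec, hSinv, Matrix.one_mulVec]
      rw [← hydef, h0, Matrix.mulVec_zero] at this
      exact this.symm
    -- B y = lam • A y
    have hAy : A *ᵥ y = S *ᵥ v := by
      rw [hydef, Matrix.mulVec_mulVec, ← hSS, Matrix.mul_assoc, hSinv, Matrix.mul_one]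
    have hBy : B *ᵥ y = lam • (A *ᵥ y) := by
      have h1 : S *ᵥ (C *ᵥ v) = B *ᵥ y := by
        rw [hCdef, Matrix.mulVec_mulVec, ← Matrix.mul_assoc, ← Matrix.mul_assoc, hSinv,
          Matrix.one_mul, hydef, Matrix.mulVec_mulVec]
      rw [← h1, hCv, Matrix.mulVec_smul, hAy]
    set a : ℝ := y ⬝ᵥ (A *ᵥ y) with hadef
    set b : ℝ := y ⬝ᵥ (B *ᵥ y) with hbdef
    set t : ℝ := y ⬝ᵥ y with htdef
    have ht : 0 < t := by
      have h1 : 0 ≤ t := Finset.sum_nonneg fun j _ => mul_self_nonneg (y j)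
      rcases h1.lt_or_eq with h | h
      · exact h
      · exact absurd ((dotProduct_self_eq_zero).1 h.symm) hyne
    have hb_eq : b = lam * a := by
      rw [hbdef, hBy, dotProduct_smul, smul_eq_mul, hadef]
    have hat : μ * t ≤ a := quad_lower hAμ y
    have hbt : μ * t ≤ b := quad_lower hBμ y
    have ha : 0 < a := lt_of_lt_of_le (by positivity) hat
    have hbpos : 0 < b := lt_of_lt_of_le (by positivity) hbt
    have habs : |a - b| ≤ N * t := by
      have h1 : |y ⬝ᵥ ((A - B) *ᵥ y)| ≤ N * t := abs_dot_le_l2norm (A - B) y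
      have h2 : y ⬝ᵥ ((A - B) *ᵥ y) = a - b := by
        rw [Matrix.sub_mulVec, dotProduct_sub, hadef, hbdef]
      rwa [h2] at h1
    have hdiff : b - a ≤ N * t ∧ a - b ≤ N * t := by
      constructor
      · have := (abs_le.1 habs).1; linarith
      · exact (abs_le.1 habs).2
    have hNt : N * t ≤ (N / μ) * a := by
      have : (N / μ) * (μ * t) = N * t := by field_simp
      rw [← this]
      exact mul_le_mul_of_nonneg_left hat hr
    have hNt' : N * t ≤ (N / μ) * b := by
      have : (N / μ) * (μ * t) = N * t := by field_simp
      rw [← this]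
      exact mul_le_mul_of_nonneg_left hbt hr
    have hlam_le : lam ≤ 1 + N / μ := by
      have h1 : lam * a ≤ (1 + N / μ) * a := by
        rw [← hb_eq]
        nlinarith [hdiff.1, hNt]
      exact le_of_mul_le_mul_right (by linarith [h1]) ha
    have hlaminv_le : lam⁻¹ ≤ 1 + N / μ := by
      have hab : a = lam⁻¹ * b := by
        rw [hb_eq, ← mul_assoc, inv_mul_cancel₀ (ne_of_gt hlam), one_mul]
      have h1 : lam⁻¹ * b ≤ (1 + N / μ) * b := by
        rw [← hab]
        nlinarith [hdiff.2, hNt']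
      exact le_of_mul_le_mul_right (by linarith [h1]) hbpos
    rw [abs_le]
    constructor
    · have h1 : Real.log lam⁻¹ ≤ lam⁻¹ - 1 :=
        Real.log_le_sub_one_of_pos (inv_pos.2 hlam)
      rw [Real.log_inv] at h1
      linarith
    · have h1 : Real.log lam ≤ lam - 1 := Real.log_le_sub_one_of_pos hlam
      linarith
  -- assemble
  have hmlog : mlog C = (hCherm.eigenvectorUnitary : Matrix (Fin n) (Fin n) ℝ) *
      Matrix.diagonal (Real.log ∘ hCherm.eigenvalues) *
      (star (hCherm.eigenvectorUnitary : Matrix (Fin n) (Fin n) ℝ)) := by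
    rw [mlog, dif_pos hCherm]
  have hthom : thompson A B = ‖mlog C‖ := rfl
  rw [hthom, hmlog]
  have hU := (hCherm.eigenvectorUnitary).2
  have h1 : ‖(hCherm.eigenvectorUnitary : Matrix (Fin n) (Fin n) ℝ) *
      Matrix.diagonal (Real.log ∘ hCherm.eigenvalues) *
      (star (hCherm.eigenvectorUnitary : Matrix (Fin n) (Fin n) ℝ))‖
      = ‖Matrix.diagonal (Real.log ∘ hCherm.eigenvalues)‖ := by
    rw [CStarRing.norm_mul_mem_unitary _ (Unitary.star_mem hU),
      CStarRing.norm_mem_unitary_mul _ hU]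
  rw [h1]
  have h2 : ‖Matrix.diagonal (Real.log ∘ hCherm.eigenvalues)‖ ≤ N / μ :=
    l2norm_diagonal_le _ _ hr fun i => heig i
  calc ‖Matrix.diagonal (Real.log ∘ hCherm.eigenvalues)‖ ≤ N / μ := h2
    _ = opNorm (A - B) / μ := by rw [hNdef, opNorm_eq_l2norm]
end

section
/- Suppose A, B are positive definite matrices with B ⪰ A. Then ‖A − B‖ ≤ ‖A‖ (exp(δ_∞(A,B)) − 1). Moreover, if δ_∞(A,B) ≤ 1, then ‖A − B‖ ≤ e ‖A‖ δ_∞(A,B). -/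
open Matrix MeasureTheory ProbabilityTheory
open scoped Classical RealInnerProductSpace

section ThompsonHelpers

open scoped Matrix.Norms.L2Operator

lemma opNorm_eq_l2 {m n : Type*} [Fintype m] [Fintype n] [DecidableEq n] [DecidableEq m]
    (A : Matrix m n ℝ) : opNorm A = ‖A‖ := (Matrix.l2_opNorm_def A).symm

lemma opNorm_diagonal_le {n : Type*} [Fintype n] [DecidableEq n] (d : n → ℝ) {s : ℝ}
    (hs : 0 ≤ s) (h : ∀ i, |d i| ≤ s) : opNorm (Matrix.diagonal d) ≤ s := by
  rw [opNorm]
  apply ContinuousLinearMap.opNorm_le_bound _ hs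
  intro x
  simp only [LinearMap.coe_toContinuousLinearMap', toEuclideanLin_apply]
  rw [EuclideanSpace.norm_eq]
  have hx : ‖x‖ = Real.sqrt (∑ i, x i ^ 2) := by
    rw [EuclideanSpace.norm_eq]
    congr 1; apply Finset.sum_congr rfl; intros; rw [Real.norm_eq_abs, sq_abs]
  rw [hx]
  rw [show s * Real.sqrt (∑ i, x i ^ 2) = Real.sqrt (s^2 * ∑ i, x i ^ 2) by
    rw [Real.sqrt_mul (sq_nonneg s), Real.sqrt_sq hs]]
  apply Real.sqrt_le_sqrt
  rw [Finset.mul_sum]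
  apply Finset.sum_le_sum
  intro i _
  rw [WithLp.ofLp_toLp, Real.norm_eq_abs, sq_abs, Matrix.mulVec_diagonal,
    mul_pow]
  have h2 : d i ^ 2 ≤ s ^ 2 := by
    nlinarith [h i, abs_nonneg (d i), neg_abs_le (d i), le_abs_self (d i)]
  nlinarith [sq_nonneg (x i)]


lemma opNorm_le_thompson_aux {n : ℕ} (A B : Matrix (Fin n) (Fin n) ℝ)
    (hA : A.PosDef) (hB : B.PosDef) (hBA : (B - A).PosSemidef) :
    opNorm (A - B) ≤ opNorm A * (Real.exp (thompson A B) - 1) ∧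
      (thompson A B ≤ 1 → opNorm (A - B) ≤ Real.exp 1 * opNorm A * thompson A B) := by
  classical
  rcases isEmpty_or_nonempty (Fin n) with hn | hn
  · have h0 : ∀ M : Matrix (Fin n) (Fin n) ℝ, opNorm M = 0 := by
      intro M
      have hM : M = 0 := Subsingleton.elim _ _
      rw [hM, opNorm]
      simp only [map_zero, norm_zero]
    have ht : thompson A B = 0 := h0 _
    refine ⟨?_, fun _ => ?_⟩ <;> rw [h0, ht] <;> simp [h0]
  haveI : Nontrivial (Matrix (Fin n) (Fin n) ℝ) := by
    obtain ⟨i⟩ := hn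
    exact ⟨0, 1, fun h => one_ne_zero (α := ℝ) (by simpa using (congr_fun (congr_fun h i) i).symm)⟩
  -- setup
  set S := sqrtPD A with hSdef'
  have hAps := hA.posSemidef
  have hSdef : S = (hAps.1.eigenvectorUnitary : Matrix (Fin n) (Fin n) ℝ) *
      Matrix.diagonal (Real.sqrt ∘ hAps.1.eigenvalues) *
      (star (hAps.1.eigenvectorUnitary : Matrix (Fin n) (Fin n) ℝ)) := by
    rw [hSdef', sqrtPD, dif_pos hAps]
  have hSps : S.PosSemidef := by
    rw [hSdef, Matrix.star_eq_conjTranspose]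
    exact (Matrix.posSemidef_diagonal_iff.2 fun i => Real.sqrt_nonneg _).mul_mul_conjTranspose_same _
  have hSS : S * S = A := by
    have hsp := hAps.1.spectral_theorem
    have hD : Matrix.diagonal (Real.sqrt ∘ hAps.1.eigenvalues) *
        Matrix.diagonal (Real.sqrt ∘ hAps.1.eigenvalues) =
        Matrix.diagonal (RCLike.ofReal ∘ hAps.1.eigenvalues) := by
      rw [Matrix.diagonal_mul_diagonal]; congr 1; funext i
      simp [Real.mul_self_sqrt (hAps.eigenvalues_nonneg i)]
    rw [hSdef]
    conv_rhs => rw [hsp]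
    rw [Unitary.conjStarAlgAut_apply, ← hD]
    simp only [mul_assoc]
    rw [← mul_assoc (star _) _ (Matrix.diagonal _ * _), Unitary.coe_star_mul_self, one_mul]
  have hSunit : IsUnit S.det := by
    have hdet : S.det * S.det = A.det := by rw [← Matrix.det_mul, hSS]
    have hApos := hA.det_pos
    refine isUnit_iff_ne_zero.mpr fun h => ?_
    rw [h, mul_zero] at hdet
    exact hApos.ne (by rw [hdet])
  have hSinv : S⁻¹ * S = 1 := Matrix.nonsing_inv_mul S hSunit
  have hSinv' : S * S⁻¹ = 1 := Matrix.mul_nonsing_inv S hSunit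
  have hSinvH : S⁻¹.IsHermitian := hSps.1.inv
  set C := S⁻¹ * B * S⁻¹ with hCdef
  have hCh : C.IsHermitian := by
    have h1 : C = (S⁻¹)ᴴ * B * S⁻¹ := by rw [hSinvH.eq]
    rw [h1]
    exact Matrix.isHermitian_conjTranspose_mul_mul _ hB.isHermitian
  have hSAS : S⁻¹ * A * S⁻¹ = 1 := by
    rw [← hSS, ← mul_assoc, mul_assoc _ S S⁻¹, hSinv', mul_one, hSinv]
  have hC1 : (C - 1).PosSemidef := by
    have h1 : C - 1 = (S⁻¹)ᴴ * (B - A) * S⁻¹ := by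
      rw [hSinvH.eq, Matrix.mul_sub, Matrix.sub_mul, hSAS, hCdef]
    rw [h1]
    exact hBA.conjTranspose_mul_mul_same _
  set μ := hCh.eigenvalues with hμdef
  have hμ1 : ∀ i, 1 ≤ μ i := by
    intro i
    have h1 : μ i ∈ spectrum ℝ C := hCh.eigenvalues_mem_spectrum_real i
    have h2 : μ i - 1 ∈ spectrum ℝ (C - 1) := by
      have h3 := Set.sub_mem_sub h1 (Set.mem_singleton (1:ℝ))
      rw [spectrum.sub_singleton_eq] at h3
      simpa using h3
    rw [Matrix.IsHermitian.spectrum_real_eq_range_eigenvalues hC1.1] at h2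
    obtain ⟨j, hj⟩ := h2
    have := hC1.eigenvalues_nonneg j
    rw [hj] at this
    linarith
  -- the matrix logarithm
  set U := hCh.eigenvectorUnitary with hUdef
  have hmlog : mlog C = (U : Matrix (Fin n) (Fin n) ℝ) * Matrix.diagonal (Real.log ∘ μ) *
      star (U : Matrix (Fin n) (Fin n) ℝ) := by
    rw [mlog, dif_pos hCh]
  set t := thompson A B with htdef
  have hT : t = ‖mlog C‖ := by rw [htdef, thompson, opNorm_eq_l2]
  have ht0 : 0 ≤ t := hT ▸ norm_nonneg _
  have hlog_le : ∀ i, Real.log (μ i) ≤ t := by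
    intro i
    have hmem : Real.log (μ i) ∈ spectrum ℝ (mlog C) := by
      rw [hmlog, Unitary.spectrum_star_right_conjugate, spectrum_diagonal]
      exact ⟨i, rfl⟩
    have := spectrum.norm_le_norm_of_mem hmem
    rw [Real.norm_eq_abs] at this
    rw [hT]
    exact (le_abs_self _).trans this
  have hμe : ∀ i, μ i ≤ Real.exp t := by
    intro i
    have : μ i = Real.exp (Real.log (μ i)) :=
      (Real.exp_log (lt_of_lt_of_le one_pos (hμ1 i))).symm
    rw [this]
    exact Real.exp_le_exp.2 (hlog_le i)
  -- norm bound on C - 1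
  have hexp0 : (0:ℝ) ≤ Real.exp t - 1 := by
    have := Real.one_le_exp ht0
    linarith
  have hC1norm : ‖C - 1‖ ≤ Real.exp t - 1 := by
    have hdec : C - 1 = (U : Matrix (Fin n) (Fin n) ℝ) *
        Matrix.diagonal (fun i => μ i - 1) * star (U : Matrix (Fin n) (Fin n) ℝ) := by
      have hsp := hCh.spectral_theorem
      rw [Unitary.conjStarAlgAut_apply] at hsp
      have hone : (1 : Matrix (Fin n) (Fin n) ℝ) = (U : Matrix (Fin n) (Fin n) ℝ) *
          (1 : Matrix (Fin n) (Fin n) ℝ) * star (U : Matrix (Fin n) (Fin n) ℝ) := by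
        rw [mul_one, ← Unitary.coe_star, Unitary.coe_mul_star_self]
      calc C - 1 = (U : Matrix (Fin n) (Fin n) ℝ) * Matrix.diagonal (RCLike.ofReal ∘ μ) *
            star (U : Matrix (Fin n) (Fin n) ℝ) - (U : Matrix (Fin n) (Fin n) ℝ) *
            (1 : Matrix (Fin n) (Fin n) ℝ) * star (U : Matrix (Fin n) (Fin n) ℝ) := by
            rw [← hsp, ← hone]
        _ = (U : Matrix (Fin n) (Fin n) ℝ) * (Matrix.diagonal (RCLike.ofReal ∘ μ) - 1) *
            star (U : Matrix (Fin n) (Fin n) ℝ) := by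
            rw [Matrix.mul_sub, Matrix.sub_mul]
        _ = _ := by
            congr 1
            congr 1
            rw [← Matrix.diagonal_one, Matrix.diagonal_sub]
            rfl
    rw [hdec, mul_assoc, CStarRing.norm_coe_unitary_mul, ← Unitary.coe_star,
      CStarRing.norm_mul_coe_unitary, ← opNorm_eq_l2]
    apply opNorm_diagonal_le _ hexp0
    intro i
    rw [abs_of_nonneg (by linarith [hμ1 i])]
    linarith [hμe i]
  -- combine
  have hBA' : B - A = S * (C - 1) * S := by
    have h1 : S * C * S = B := by
      calc S * (S⁻¹ * B * S⁻¹) * S = S * (S⁻¹ * (B * (S⁻¹ * S))) := by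
            simp only [mul_assoc]
        _ = B := by rw [hSinv, mul_one, ← mul_assoc, hSinv', one_mul]
    calc B - A = S * C * S - S * 1 * S := by rw [h1, mul_one, hSS]
      _ = S * (C - 1) * S := by rw [Matrix.mul_sub, Matrix.sub_mul]
  have hSn : ‖S‖ * ‖S‖ = ‖A‖ := by
    rw [← Matrix.l2_opNorm_conjTranspose_mul_self S, hSps.1.eq, hSS]
  have hmain : opNorm (A - B) ≤ opNorm A * (Real.exp t - 1) := by
    rw [opNorm_eq_l2, opNorm_eq_l2, norm_sub_rev, hBA']
    calc ‖S * (C - 1) * S‖ ≤ ‖S * (C - 1)‖ * ‖S‖ := norm_mul_le _ _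
      _ ≤ ‖S‖ * ‖C - 1‖ * ‖S‖ := by
          have := norm_mul_le S (C - 1)
          nlinarith [norm_nonneg S]
      _ ≤ ‖A‖ * (Real.exp t - 1) := by
          nlinarith [norm_nonneg S, norm_nonneg (C - 1), hC1norm]
  refine ⟨hmain, fun ht1 => ?_⟩
  have h2 : Real.exp t - 1 ≤ Real.exp 1 * t := by
    have hin : 1 - t ≤ Real.exp (-t) := by linarith [Real.add_one_le_exp (-t)]
    have hexpinv : Real.exp (-t) = (Real.exp t)⁻¹ := Real.exp_neg t
    have hpos := Real.exp_pos t
    have hle : Real.exp t ≤ Real.exp 1 := Real.exp_le_exp.2 ht1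
    have h3 : (1 - t) * Real.exp t ≤ 1 := by
      rw [hexpinv] at hin
      calc (1 - t) * Real.exp t ≤ (Real.exp t)⁻¹ * Real.exp t :=
            mul_le_mul_of_nonneg_right hin hpos.le
        _ = 1 := inv_mul_cancel₀ hpos.ne'
    nlinarith
  have hAn : 0 ≤ opNorm A := by rw [opNorm_eq_l2]; exact norm_nonneg _
  calc opNorm (A - B) ≤ opNorm A * (Real.exp t - 1) := hmain
    _ ≤ opNorm A * (Real.exp 1 * t) := mul_le_mul_of_nonneg_left h2 hAn
    _ = Real.exp 1 * opNorm A * t := by ring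

end ThompsonHelpers

/-- Operator-norm bound of the difference in terms of the Thompson metric. -/
theorem opNorm_le_thompson {n : ℕ} (A B : Matrix (Fin n) (Fin n) ℝ)
    (hA : A.PosDef) (hB : B.PosDef) (hBA : (B - A).PosSemidef) :
    opNorm (A - B) ≤ opNorm A * (Real.exp (thompson A B) - 1) ∧
      (thompson A B ≤ 1 → opNorm (A - B) ≤ Real.exp 1 * opNorm A * thompson A B) := by
  exact opNorm_le_thompson_aux A B hA hB hBA
end
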